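/- arXiv:2511.10497 — 7 statements merged into one kernel-verified Lean document; each statement's English description precedes it below -/
import Mathlib

section
/- Let G be an n-vertex graph with minimum degree at least (n+1)/2. Then G is Hamilton-connected. -/
open SimpleGraph List

set_option linter.unusedSectionVars false
set_option maxHeartbeats 1000000

section HC
variable {W : Type*} [DecidableEq W]

/-- Hamilton cycle of `K`, as a list visiting every vertex once, with consecutive
vertices adjacent and last adjacent to first. -/
def IsHC (K : SimpleGraph W) (L : List W) : Prop :=
  L.Nodup ∧ (∀ v, v ∈ L) ∧ L.IsChain K.Adj ∧
  ∀ u v, L.getLast? = some u → L.head? = some v → K.Adj u v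

/-- Hamilton path from `x` to `y`. -/
def IsHP (K : SimpleGraph W) (x y : W) (l : List W) : Prop :=
  l.Nodup ∧ (∀ v, v ∈ l) ∧ l.IsChain K.Adj ∧ l.head? = some x ∧ l.getLast? = some y

lemma chain'_of_chain'_mem {R S : W → W → Prop} :
    ∀ {l : List W}, (∀ a ∈ l, ∀ b ∈ l, R a b → S a b) → l.IsChain R → l.IsChain S := by
  intro l
  induction l with
  | nil => simp
  | cons a l ih =>
    intro h hc
    cases l with
    | nil => simp
    | cons b l' =>
      rw [List.isChain_cons_cons] at hc ⊢
      exact ⟨h a (by simp) b (by simp) hc.1,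
        ih (fun x hx y hy => h x (by simp [hx]) y (by simp [hy])) hc.2⟩

lemma chain'_reverse_of_symm {K : SimpleGraph W} {l : List W} (h : l.IsChain K.Adj) :
    l.reverse.IsChain K.Adj :=
  List.isChain_reverse.mpr (h.imp fun _ _ hab => hab.symm)

lemma getLast?_cons_of_ne_nil {h : W} {t : List W} (ht : t ≠ []) :
    (h :: t).getLast? = t.getLast? := by
  cases t with
  | nil => exact absurd rfl ht
  | cons a l => exact List.getLast?_cons_cons

lemma IsHC.rotate_one {K : SimpleGraph W} {h : W} {t : List W}
    (hc : IsHC K (h :: t)) : IsHC K (t ++ [h]) := by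
  obtain ⟨hnd, hmem, hch, hwrap⟩ := hc
  rcases eq_or_ne t [] with rfl | ht
  · exact absurd (hwrap h h (by simp) (by simp)) (K.irrefl)
  refine ⟨?_, ?_, ?_, ?_⟩
  · exact ((t.perm_append_singleton h).nodup_iff).mpr hnd
  · intro v; have := hmem v; simp at this ⊢; tauto
  · refine (hch.tail).append (List.isChain_singleton h) ?_
    intro a ha b hb
    simp only [List.head?_cons, Option.mem_def, Option.some_inj] at hb; subst hb
    exact hwrap a h (by rw [_root_.getLast?_cons_of_ne_nil ht]; exact ha) (by simp)
  · intro u v hLast hHead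
    rw [List.getLast?_concat] at hLast
    obtain ⟨a, t', rfl⟩ : ∃ a t', t = a :: t' := by
      cases t with | nil => exact absurd rfl ht | cons a t' => exact ⟨a, t', rfl⟩
    simp only [Option.some_inj] at hLast
    subst hLast
    simp only [List.cons_append, List.head?_cons, Option.some_inj] at hHead
    subst hHead
    exact (List.isChain_cons_cons.mp hch).1

lemma IsHC.rotate_to {K : SimpleGraph W} {L : List W} (hc : IsHC K L) {x : W}
    (hx : x ∈ L) : ∃ t, IsHC K (x :: t) := by
  obtain ⟨k, hk, hget⟩ := List.mem_iff_getElem.mp hx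
  have hget' : L[k]? = some x := by rw [List.getElem?_eq_getElem hk]; exact congrArg some hget
  clear hx hget hk
  induction k generalizing L with
  | zero =>
    obtain ⟨a, t, rfl⟩ : ∃ a t, L = a :: t := by
      cases L with | nil => simp at hget' | cons a t => exact ⟨a, t, rfl⟩
    simp only [List.getElem?_cons_zero, Option.some_inj] at hget'
    subst hget'; exact ⟨t, hc⟩
  | succ k ih =>
    obtain ⟨a, t, rfl⟩ : ∃ a t, L = a :: t := by
      cases L with | nil => simp at hget' | cons a t => exact ⟨a, t, rfl⟩
    simp only [List.getElem?_cons_succ] at hget'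
    have hk : k < t.length := by
      by_contra hcon
      rw [List.getElem?_eq_none (by omega)] at hget'
      exact nomatch hget'
    refine ih hc.rotate_one ?_
    rw [List.getElem?_append_left hk]
    exact hget'

/-- The crossing (Ore/Pósa) argument: from a Hamilton path between two
nonadjacent vertices of large degree sum, produce a Hamilton cycle. -/
lemma IsHP.to_isHC [Fintype W] {K : SimpleGraph W} {x y : W} {l : List W}
    (hl : IsHP K x y l) (hnadj : ¬ K.Adj x y)
    (hdeg : Fintype.card W ≤ (K.neighborSet x).ncard + (K.neighborSet y).ncard) :
    ∃ co, IsHC K co := by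
  classical
  obtain ⟨hnd, hmem, hch, hhead, hlast⟩ := hl
  have hlen : l.length = Fintype.card W := by
    have h1 : l.toFinset = Finset.univ := Finset.eq_univ_iff_forall.mpr (by simp [hmem])
    rw [← List.toFinset_card_of_nodup hnd, h1, Finset.card_univ]
  have hlpos : 0 < l.length := by
    rcases l with _ | _
    · simp at hhead
    · simp
  have hget0 : l[0]'hlpos = x := by
    rw [List.head?_eq_getElem?, List.getElem?_eq_getElem hlpos, Option.some_inj] at hhead
    exact hhead
  have hlastlt : l.length - 1 < l.length := by omega
  have hgetlast : l[l.length - 1]'hlastlt = y := by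
    rw [List.getLast?_eq_getElem?, List.getElem?_eq_getElem hlastlt, Option.some_inj] at hlast
    exact hlast
  let A : Finset ℕ := (Finset.range (l.length - 1)).filter fun i => K.Adj x (l.getD (i + 1) x)
  let B : Finset ℕ := (Finset.range (l.length - 1)).filter fun i => K.Adj (l.getD i x) y
  have hA : A.card = (K.neighborSet x).ncard := by
    rw [Set.ncard_eq_toFinset_card']
    refine Finset.card_bij (fun i _ => l.getD (i + 1) x) ?_ ?_ ?_
    · intro i hi
      simp only [A, Finset.mem_filter, Finset.mem_range] at hi
      simpa using hi.2
    · intro i hi j hj hij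
      simp only [A, Finset.mem_filter, Finset.mem_range] at hi hj
      have hi1 : i + 1 < l.length := by omega
      have hj1 : j + 1 < l.length := by omega
      rw [List.getD_eq_getElem l x hi1, List.getD_eq_getElem l x hj1] at hij
      have := (hnd.getElem_inj_iff).mp hij
      omega
    · intro u hu
      simp only [Set.mem_toFinset, mem_neighborSet] at hu
      obtain ⟨j, hj, hju⟩ := List.mem_iff_getElem.mp (hmem u)
      obtain ⟨i, rfl⟩ : ∃ i, j = i + 1 := by
        refine ⟨j - 1, ?_⟩
        have : j ≠ 0 := by
          intro h; subst h; rw [hget0] at hju; exact K.irrefl (hju ▸ hu)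
        omega
      have hmemA : i ∈ A := by
        simp only [A, Finset.mem_filter, Finset.mem_range]
        refine ⟨by omega, ?_⟩
        rw [List.getD_eq_getElem l x hj, hju]; exact hu
      refine ⟨i, hmemA, ?_⟩
      show l.getD (i + 1) x = u
      rw [List.getD_eq_getElem l x hj, hju]
  have hB : B.card = (K.neighborSet y).ncard := by
    rw [Set.ncard_eq_toFinset_card']
    refine Finset.card_bij (fun i _ => l.getD i x) ?_ ?_ ?_
    · intro i hi
      simp only [B, Finset.mem_filter, Finset.mem_range] at hi
      have hi1 : i < l.length := by omega
      rw [List.getD_eq_getElem l x hi1] at hi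
      show l.getD i x ∈ (K.neighborSet y).toFinset
      rw [List.getD_eq_getElem l x hi1]
      simpa using hi.2.symm
    · intro i hi j hj hij
      simp only [B, Finset.mem_filter, Finset.mem_range] at hi hj
      have hi1 : i < l.length := by omega
      have hj1 : j < l.length := by omega
      rw [List.getD_eq_getElem l x hi1, List.getD_eq_getElem l x hj1] at hij
      exact (hnd.getElem_inj_iff).mp hij
    · intro u hu
      simp only [Set.mem_toFinset, mem_neighborSet] at hu
      obtain ⟨j, hj, hju⟩ := List.mem_iff_getElem.mp (hmem u)
      have hjne : j ≠ l.length - 1 := by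
        intro h; subst h; rw [hgetlast] at hju
        exact K.irrefl (hju ▸ hu)
      have hmemB : j ∈ B := by
        simp only [B, Finset.mem_filter, Finset.mem_range]
        refine ⟨by omega, ?_⟩
        rw [List.getD_eq_getElem l x hj, hju]; exact hu.symm
      refine ⟨j, hmemB, ?_⟩
      show l.getD j x = u
      rw [List.getD_eq_getElem l x hj, hju]
  have hABsub : A ∪ B ⊆ Finset.range (l.length - 1) := by
    intro i hi
    rcases Finset.mem_union.mp hi with h | h
    · exact (Finset.mem_filter.mp h).1
    · exact (Finset.mem_filter.mp h).1
  have hUnion : (A ∪ B).card ≤ l.length - 1 := by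
    simpa using Finset.card_le_card hABsub
  have hInter : 0 < (A ∩ B).card := by
    have h1 := Finset.card_union_add_card_inter A B
    have : l.length ≤ A.card + B.card := by rw [hA, hB]; omega
    omega
  obtain ⟨i, hi⟩ := Finset.card_pos.mp hInter
  obtain ⟨hiA, hiB⟩ := Finset.mem_inter.mp hi
  simp only [A, B, Finset.mem_filter, Finset.mem_range] at hiA hiB
  have hi1 : i + 1 < l.length := by omega
  have hilt : i < l.length := by omega
  have hadjA : K.Adj x (l[i + 1]'hi1) := by
    rw [List.getD_eq_getElem l x hi1] at hiA; exact hiA.2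
  have hadjB : K.Adj (l[i]'hilt) y := by
    rw [List.getD_eq_getElem l x hilt] at hiB; exact hiB.2
  -- build the cycle
  have hperm : (l.take (i + 1) ++ (l.drop (i + 1)).reverse) ~ l := by
    calc l.take (i + 1) ++ (l.drop (i + 1)).reverse
        ~ l.take (i + 1) ++ l.drop (i + 1) :=
          List.Perm.append_left _ ((l.drop (i + 1)).reverse_perm)
      _ = l := List.take_append_drop _ _
  refine ⟨l.take (i + 1) ++ (l.drop (i + 1)).reverse, ?_, ?_, ?_, ?_⟩
  · exact (hperm.nodup_iff).mpr hnd
  · exact fun v => hperm.mem_iff.mpr (hmem v)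
  · refine (hch.take _).append (chain'_reverse_of_symm (hch.drop _)) ?_
    intro p hp q hq
    have h1 : (l.take (i + 1)).getLast? = some (l[i]'hilt) := by
      rw [List.getLast?_eq_getElem?, List.length_take]
      have hmin : (i + 1) ⊓ l.length = i + 1 := by omega
      rw [hmin]
      simp only [Nat.add_sub_cancel]
      rw [List.getElem?_take, if_pos (by omega)]
      exact List.getElem?_eq_getElem hilt
    have h2 : (l.drop (i + 1)).reverse.head? = some y := by
      rw [List.head?_reverse, List.getLast?_eq_getElem?, List.length_drop,
        List.getElem?_drop]
      have harith : i + 1 + (l.length - (i + 1) - 1) = l.length - 1 := by omega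
      rw [harith, List.getElem?_eq_getElem hlastlt, hgetlast]
    rw [h1] at hp
    rw [h2] at hq
    simp only [Option.mem_def, Option.some_inj] at hp hq
    subst hp; subst hq
    exact hadjB
  · intro u v hLast hHead
    have hrevne : (l.drop (i + 1)).reverse ≠ [] := by
      simp only [ne_eq, List.reverse_eq_nil_iff, List.drop_eq_nil_iff]
      omega
    rw [List.getLast?_append_of_ne_nil _ hrevne, List.getLast?_reverse, List.head?_drop,
      List.getElem?_eq_getElem hi1, Option.some_inj] at hLast
    subst hLast
    have hne0 : (i + 1) ≠ 0 := by omega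
    have hhead' : (l.take (i + 1) ++ (l.drop (i + 1)).reverse).head? = some x := by
      cases htk : l.take (i + 1) with
      | nil =>
        exfalso
        rw [List.take_eq_nil_iff] at htk
        rcases htk with h | h
        · omega
        · subst h; simp at hlpos
      | cons a t =>
        rw [List.head?_append_of_ne_nil]
        · rw [← htk, List.head?_take, if_neg hne0, hhead]
        · simp [htk]
    rw [hhead', Option.some_inj] at hHead
    subst hHead
    exact hadjA.symm


lemma adj_of_sup_edge {K : SimpleGraph W} {x y a b : W}
    (h : (K ⊔ fromEdgeSet {s(x, y)}).Adj a b) (hax : a ≠ x) (hbx : b ≠ x) :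
    K.Adj a b := by
  simp only [sup_adj, fromEdgeSet_adj, Set.mem_singleton_iff, Sym2.eq_iff] at h
  tauto

lemma adj_of_sup_edge' {K : SimpleGraph W} {x y a : W}
    (h : (K ⊔ fromEdgeSet {s(x, y)}).Adj a x) (hay : a ≠ y) :
    K.Adj a x := by
  have hax : a ≠ x := h.ne
  simp only [sup_adj, fromEdgeSet_adj, Set.mem_singleton_iff, Sym2.eq_iff] at h
  tauto

/-- Bondy–Chvátal closure step. -/
lemma bc_step [Fintype W] {K : SimpleGraph W} {x y : W}
    (hcard : 3 ≤ Fintype.card W) (hxy : x ≠ y) (hnadj : ¬ K.Adj x y)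
    (hdeg : Fintype.card W ≤ (K.neighborSet x).ncard + (K.neighborSet y).ncard)
    (hc : ∃ co, IsHC (K ⊔ fromEdgeSet {s(x, y)}) co) : ∃ co, IsHC K co := by
  classical
  obtain ⟨c0, hc0⟩ := hc
  obtain ⟨t, ht⟩ := hc0.rotate_to (hc0.2.1 x)
  clear hc0
  obtain ⟨hnd, hmem, hch, hwrap⟩ := ht
  have hlen : (x :: t).length = Fintype.card W := by
    have h1 : (x :: t).toFinset = Finset.univ :=
      Finset.eq_univ_iff_forall.mpr (fun v => by simpa using hmem v)
    rw [← List.toFinset_card_of_nodup hnd, h1, Finset.card_univ]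
  obtain ⟨h0, t1, rfl⟩ : ∃ h0 t1, t = h0 :: t1 := by
    cases t with
    | nil => exfalso; simp at hlen; omega
    | cons h0 t1 => exact ⟨h0, t1, rfl⟩
  have ht1ne : t1 ≠ [] := by
    intro h; subst h; simp at hlen; omega
  have hxnotmem : x ∉ h0 :: t1 := by
    intro h; exact (List.nodup_cons.mp hnd).1 h
  -- the inner chain is a chain in K
  have hinner : (h0 :: t1).IsChain K.Adj := by
    refine chain'_of_chain'_mem ?_ hch.tail
    intro a ha b hb hab
    exact adj_of_sup_edge hab (fun h => hxnotmem (h ▸ ha)) (fun h => hxnotmem (h ▸ hb))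
  -- the first edge
  have hfirst : (K ⊔ fromEdgeSet {s(x, y)}).Adj x h0 := (List.isChain_cons_cons.mp hch).1
  -- the last vertex
  set lst := (h0 :: t1).getLast (List.cons_ne_nil _ _) with hlst
  have hlstmem : lst ∈ h0 :: t1 := List.getLast_mem _
  have hlstgl : (x :: h0 :: t1).getLast? = some lst := by
    rw [List.getLast?_cons_cons]
    exact (List.getLast?_eq_getLast _)
  have hwrap' : (K ⊔ fromEdgeSet {s(x, y)}).Adj lst x :=
    hwrap lst x hlstgl (by simp)
  have hlstx : lst ≠ x := hwrap'.ne
  by_cases hh0 : h0 = y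
  · -- Case A : reverse the tail
    have hlsty : lst ≠ y := by
      have hlt : lst = t1.getLast ht1ne := by
        rw [hlst]
        exact List.getLast_cons ht1ne
      rw [hlt]
      intro h
      have hmem' : y ∈ t1 := h ▸ List.getLast_mem ht1ne
      rw [← hh0] at hmem'
      exact (List.nodup_cons.mp (List.nodup_cons.mp hnd).2).1 hmem'
    have hKlx : K.Adj lst x := adj_of_sup_edge' hwrap' hlsty
    refine IsHP.to_isHC (K := K) (x := x) (y := y) (l := x :: (h0 :: t1).reverse)
      ?_ hnadj hdeg
    have hperm : (x :: (h0 :: t1).reverse) ~ (x :: h0 :: t1) :=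
      List.Perm.cons x ((h0 :: t1).reverse_perm)
    refine ⟨hperm.nodup_iff.mpr hnd, fun v => hperm.mem_iff.mpr (hmem v), ?_, by simp, ?_⟩
    · rw [List.isChain_cons]
      refine ⟨?_, chain'_reverse_of_symm hinner⟩
      intro z hz
      rw [List.head?_reverse, List.getLast?_eq_getLast (l := h0 :: t1) (List.cons_ne_nil _ _)] at hz
      simp only [Option.mem_def, Option.some_inj] at hz
      subst hz
      exact hKlx.symm
    · rw [_root_.getLast?_cons_of_ne_nil (by simp), List.getLast?_reverse]
      simp [hh0]
  · -- h0 ≠ y : the first edge is a K-edge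
    have hKxh0 : K.Adj x h0 := by
      have := hfirst.symm
      exact (adj_of_sup_edge' this hh0).symm
    by_cases hlsty : lst = y
    · -- Case B : x :: h0 :: t1 is a Hamilton path from x to y
      refine IsHP.to_isHC (K := K) (x := x) (y := y) (l := x :: h0 :: t1) ?_ hnadj hdeg
      refine ⟨hnd, hmem, ?_, by simp, by rw [hlstgl, hlsty]⟩
      exact List.isChain_cons_cons.mpr ⟨hKxh0, hinner⟩
    · -- Case C : the cycle is already a K-cycle
      have hKlx : K.Adj lst x := adj_of_sup_edge' hwrap' hlsty
      refine ⟨x :: h0 :: t1, hnd, hmem, List.isChain_cons_cons.mpr ⟨hKxh0, hinner⟩, ?_⟩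
      intro u v hu hv
      rw [hlstgl, Option.some_inj] at hu
      simp only [List.head?_cons, Option.some_inj] at hv
      subst hu; subst hv
      exact hKlx

/-- Bondy–Chvátal closure: descending induction on missing edges. -/
lemma hc_closure [Fintype W] (hcard : 3 ≤ Fintype.card W)
    (Hlow Hfull : SimpleGraph W)
    (hdeg : ∀ x y : W, x ≠ y → ¬ Hlow.Adj x y → Hfull.Adj x y →
      Fintype.card W ≤ (Hlow.neighborSet x).ncard + (Hlow.neighborSet y).ncard)
    (hfull : ∃ co, IsHC Hfull co) :
    ∀ k (H : SimpleGraph W), Hlow ≤ H → H ≤ Hfull →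
      (Hfull.edgeSet \ H.edgeSet).ncard ≤ k → ∃ co, IsHC H co := by
  classical
  have hreach : ∀ H : SimpleGraph W, H ≤ Hfull → Hfull.edgeSet \ H.edgeSet = ∅ → H = Hfull := by
    intro H hle hdiff
    refine le_antisymm hle ?_
    rw [← edgeSet_subset_edgeSet]
    intro e he
    by_contra hne
    exact (Set.eq_empty_iff_forall_notMem.mp hdiff e) ⟨he, hne⟩
  have hstep : ∀ (H : SimpleGraph W), Hlow ≤ H → H ≤ Hfull →
      Hfull.edgeSet \ H.edgeSet ≠ ∅ →
      ∃ x y : W, x ≠ y ∧ ¬ H.Adj x y ∧ Hfull.Adj x y := by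
    intro H _ _ hne
    obtain ⟨e, he⟩ := Set.nonempty_iff_ne_empty.mpr hne
    induction e using Sym2.ind with
    | _ x y =>
      obtain ⟨he1, he2⟩ := he
      rw [mem_edgeSet] at he1
      exact ⟨x, y, he1.ne, fun h => he2 ((mem_edgeSet _).mpr h), he1⟩
  intro k
  induction k with
  | zero =>
    intro H hlowH hHfull hc0
    have hdiff : Hfull.edgeSet \ H.edgeSet = ∅ := by
      have hfin : (Hfull.edgeSet \ H.edgeSet).Finite := Set.toFinite _
      rw [← Set.ncard_eq_zero hfin]
      omega
    rw [hreach H hHfull hdiff]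
    exact hfull
  | succ k ih =>
    intro H hlowH hHfull hck
    by_cases hEq : Hfull.edgeSet \ H.edgeSet = ∅
    · rw [hreach H hHfull hEq]; exact hfull
    · obtain ⟨x, y, hxy, hnadj, hfulladj⟩ := hstep H hlowH hHfull hEq
      have hmemdiff : s(x, y) ∈ Hfull.edgeSet \ H.edgeSet :=
        ⟨(mem_edgeSet _).mpr hfulladj, fun h => hnadj ((mem_edgeSet _).mp h)⟩
      set H' := H ⊔ fromEdgeSet {s(x, y)} with hH'
      have hH'le : H' ≤ Hfull := by
        refine sup_le hHfull ?_
        intro u v huv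
        rw [fromEdgeSet_adj, Set.mem_singleton_iff, Sym2.eq_iff] at huv
        rcases huv.1 with ⟨rfl, rfl⟩ | ⟨rfl, rfl⟩
        · exact hfulladj
        · exact hfulladj.symm
      have hlow' : Hlow ≤ H' := le_trans hlowH le_sup_left
      have hedge' : H'.edgeSet = H.edgeSet ∪ {s(x, y)} := by
        rw [hH', edgeSet_sup, edgeSet_fromEdgeSet]
        congr 1
        ext e
        simp only [Set.mem_diff, Set.mem_singleton_iff, Set.mem_setOf_eq, and_iff_left_iff_imp]
        rintro rfl
        exact fun hd => hxy (Sym2.mk_isDiag_iff.mp hd)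
      have hdiff' : Hfull.edgeSet \ H'.edgeSet = (Hfull.edgeSet \ H.edgeSet) \ {s(x, y)} := by
        rw [hedge', Set.diff_diff]
      have hlt : (Hfull.edgeSet \ H'.edgeSet).ncard ≤ k := by
        rw [hdiff']
        have := Set.ncard_diff_singleton_lt_of_mem hmemdiff (Set.toFinite _)
        omega
      have hcyc' := ih H' hlow' hH'le hlt
      refine bc_step hcard hxy hnadj ?_ hcyc'
      have h1 := hdeg x y hxy (fun h => hnadj (hlowH h)) hfulladj
      have h2 : (Hlow.neighborSet x).ncard ≤ (H.neighborSet x).ncard :=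
        Set.ncard_le_ncard (fun v hv => hlowH hv) (Set.toFinite _)
      have h3 : (Hlow.neighborSet y).ncard ≤ (H.neighborSet y).ncard :=
        Set.ncard_le_ncard (fun v hv => hlowH hv) (Set.toFinite _)
      omega

end HC

section Aug
variable {V : Type*} [Fintype V] [DecidableEq V]

/-- The graph `G` augmented with an extra vertex joined exactly to `a` and `b`. -/
def aug (G : SimpleGraph V) (a b : V) : SimpleGraph (Option V) where
  Adj o₁ o₂ :=
    match o₁, o₂ with
    | some u, some v => G.Adj u v
    | some u, none => u = a ∨ u = b
    | none, some v => v = a ∨ v = b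
    | none, none => False
  symm := by
    constructor
    rintro (_ | u) (_ | v) h
    · exact h
    · exact h
    · exact h
    · exact h.symm
  loopless := by
    constructor
    rintro (_ | u) h
    · exact h
    · exact G.irrefl h

lemma aug_adj_some_some {G : SimpleGraph V} {a b u v : V} :
    (aug G a b).Adj (some u) (some v) ↔ G.Adj u v := Iff.rfl

lemma aug_adj_none_some {G : SimpleGraph V} {a b v : V} :
    (aug G a b).Adj none (some v) ↔ v = a ∨ v = b := Iff.rfl

lemma aug_adj_some_none {G : SimpleGraph V} {a b u : V} :
    (aug G a b).Adj (some u) none ↔ u = a ∨ u = b := Iff.rfl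

lemma aug_adj_none_none {G : SimpleGraph V} {a b : V} :
    ¬ (aug G a b).Adj none none := fun h => h

lemma aug_mono {G : SimpleGraph V} {a b : V} : aug G a b ≤ aug ⊤ a b := by
  rintro (_ | u) (_ | v) h
  · exact h
  · exact h
  · exact h
  · exact aug_adj_some_some.mpr ((top_adj u v).mpr (aug_adj_some_some.mp h).ne)

lemma aug_degree_le {G : SimpleGraph V} {a b u : V} [DecidableRel G.Adj] :
    G.degree u ≤ ((aug G a b).neighborSet (some u)).ncard := by
  have h1 : (some '' (G.neighborSet u) : Set (Option V)) ⊆ (aug G a b).neighborSet (some u) := by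
    rintro _ ⟨v, hv, rfl⟩
    exact hv
  have h2 : (some '' (G.neighborSet u) : Set (Option V)).ncard = (G.neighborSet u).ncard :=
    Set.ncard_image_of_injective _ (Option.some_injective V)
  have h3 : (G.neighborSet u).ncard = G.degree u := by
    rw [Set.ncard_eq_toFinset_card', Set.toFinset_card, G.card_neighborSet_eq_degree]
  calc G.degree u = (some '' (G.neighborSet u) : Set (Option V)).ncard := by rw [h2, h3]
    _ ≤ _ := Set.ncard_le_ncard h1 (Set.toFinite _)

lemma exists_map_some {t : List (Option V)} (h : (none : Option V) ∉ t) :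
    ∃ t₀ : List V, t = t₀.map some := by
  induction t with
  | nil => exact ⟨[], rfl⟩
  | cons o t ih =>
    obtain ⟨t₀, rfl⟩ := ih (fun hh => h (List.mem_cons_of_mem _ hh))
    cases o with
    | none => exact absurd (List.mem_cons_self) h
    | some u => exact ⟨u :: t₀, rfl⟩

/-- Hamilton cycle of the augmented complete graph. -/
lemma aug_top_hc {a b : V} (hab : a ≠ b) (hn : 3 ≤ Fintype.card V) :
    ∃ co, IsHC (aug (⊤ : SimpleGraph V) a b) co := by
  classical
  set r := ((Finset.univ.erase a).erase b).toList with hr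
  have hanr : a ∉ r := by
    intro h
    rw [hr, Finset.mem_toList, Finset.mem_erase, Finset.mem_erase] at h
    exact h.2.1 rfl
  have hbnr : b ∉ r := by
    intro h
    rw [hr, Finset.mem_toList, Finset.mem_erase] at h
    exact h.1 rfl
  have hrnd : r.Nodup := Finset.nodup_toList _
  set la := a :: (r ++ [b]) with hla
  have hland : la.Nodup := by
    rw [hla, List.nodup_cons, List.nodup_append]
    refine ⟨?_, hrnd, List.nodup_singleton _, ?_⟩
    · rw [List.mem_append]
      rintro (h | h)
      · exact hanr h
      · simp at h; exact hab h
    · intro u hu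
      simp only [List.mem_singleton]
      rintro _ rfl hub
      subst hub
      exact hbnr hu
  have hlamem : ∀ v : V, v ∈ la := by
    intro v
    rw [hla]
    by_cases hva : v = a
    · simp [hva]
    by_cases hvb : v = b
    · simp [hvb]
    · refine List.mem_cons_of_mem _ (List.mem_append_left _ ?_)
      rw [hr, Finset.mem_toList, Finset.mem_erase, Finset.mem_erase]
      exact ⟨hvb, hva, Finset.mem_univ v⟩
  refine ⟨(none : Option V) :: la.map some, ?_, ?_, ?_, ?_⟩
  · rw [List.nodup_cons]
    constructor
    · simp
    · exact hland.map (Option.some_injective V)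
  · rintro (_ | u)
    · exact List.mem_cons_self
    · exact List.mem_cons_of_mem _ (List.mem_map_of_mem (hlamem u))
  · rw [List.isChain_cons]
    constructor
    · intro z hz
      rw [hla] at hz
      simp only [List.map_cons, List.head?_cons, Option.mem_def, Option.some_inj] at hz
      subst hz
      exact Or.inl rfl
    · rw [List.isChain_map]
      refine List.Pairwise.isChain ?_
      exact hland.imp (fun h => h)
  · intro u v hu hv
    simp only [List.head?_cons, Option.some_inj] at hv
    subst hv
    have : ((none : Option V) :: la.map some).getLast? = some (some b) := by
      rw [hla]
      simp only [List.map_cons, List.map_append, List.map_nil]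
      rw [_root_.getLast?_cons_of_ne_nil (by simp), _root_.getLast?_cons_of_ne_nil (by simp),
        List.getLast?_append_of_ne_nil _ (by simp)]
      simp
    rw [this, Option.some_inj] at hu
    subst hu
    exact Or.inr rfl

lemma walk_of_chain (G : SimpleGraph V) :
    ∀ (l : List V) (u : V), List.Chain G.Adj u l →
      ∃ p : G.Walk u ((u :: l).getLast (List.cons_ne_nil _ _)), p.support = u :: l := by
  intro l
  induction l with
  | nil => intro u _; exact ⟨SimpleGraph.Walk.nil, by simp⟩
  | cons v l ih =>
    intro u hch
    rw [List.Chain, List.isChain_cons_cons] at hch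
    obtain ⟨p, hp⟩ := ih v hch.2
    have he : ((v :: l).getLast (List.cons_ne_nil _ _)) =
        ((u :: v :: l).getLast (List.cons_ne_nil _ _)) :=
      (List.getLast_cons (List.cons_ne_nil _ _)).symm
    refine ⟨SimpleGraph.Walk.cons hch.1 (p.copy rfl he), ?_⟩
    simp [SimpleGraph.Walk.support_cons, SimpleGraph.Walk.support_copy, hp]

lemma ham_walk_of_list (G : SimpleGraph V) {a b : V} (l : List V)
    (hnd : l.Nodup) (hmem : ∀ v, v ∈ l) (hch : l.IsChain G.Adj)
    (hh : l.head? = some a) (hl : l.getLast? = some b) :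
    ∃ p : G.Walk a b, p.IsHamiltonian := by
  obtain ⟨a', rest, rfl⟩ : ∃ a' rest, l = a' :: rest := by
    cases l with
    | nil => simp at hh
    | cons a' rest => exact ⟨a', rest, rfl⟩
  simp only [List.head?_cons, Option.some_inj] at hh
  subst hh
  have hch' : List.Chain G.Adj a' rest := hch
  obtain ⟨p, hp⟩ := walk_of_chain G rest a' hch'
  have hb : (a' :: rest).getLast (List.cons_ne_nil _ _) = b := by
    rw [List.getLast?_eq_getLast (List.cons_ne_nil _ _), Option.some_inj] at hl
    exact hl
  refine ⟨p.copy rfl hb, ?_⟩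
  refine SimpleGraph.Walk.IsPath.isHamiltonian_of_mem ?_ ?_
  · refine SimpleGraph.Walk.IsPath.mk' ?_
    rw [SimpleGraph.Walk.support_copy, hp]
    exact hnd
  · intro w
    rw [SimpleGraph.Walk.support_copy, hp]
    exact hmem w

end Aug

open SimpleGraph

/-- If `G` is a graph on `n ≥ 3` vertices with minimum degree at least `(n+1)/2`, then `G`
is Hamilton-connected: any two distinct vertices are the endpoints of a Hamilton path. -/
theorem hamilton_connected_of_minDegree {V : Type*} [Fintype V] [DecidableEq V]
    (G : SimpleGraph V) [DecidableRel G.Adj]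
    (hn : 3 ≤ Fintype.card V)
    (hδ : ((Fintype.card V : ℝ) + 1) / 2 ≤ G.minDegree) :
    ∀ a b : V, a ≠ b → ∃ p : G.Walk a b, p.IsHamiltonian := by
  classical
  intro a b hab
  have hδ' : Fintype.card V + 1 ≤ 2 * G.minDegree := by
    rw [div_le_iff₀ (by norm_num : (0:ℝ) < 2)] at hδ
    have h2 : ((Fintype.card V + 1 : ℕ) : ℝ) ≤ ((2 * G.minDegree : ℕ) : ℝ) := by
      push_cast
      linarith
    exact_mod_cast h2
  have hcardO : 3 ≤ Fintype.card (Option V) := by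
    rw [Fintype.card_option]; omega
  -- get a Hamilton cycle in the augmented graph
  obtain ⟨co, hco⟩ : ∃ co, IsHC (aug G a b) co := by
    refine hc_closure hcardO (aug G a b) (aug (⊤ : SimpleGraph V) a b) ?_
      (aug_top_hc hab hn) _ (aug G a b) le_rfl aug_mono le_rfl
    rintro (_ | u) (_ | v) hxy hnadj hfulladj
    · exact absurd rfl hxy
    · exact absurd hfulladj hnadj
    · exact absurd hfulladj hnadj
    · rw [Fintype.card_option]
      have h1 := aug_degree_le (G := G) (a := a) (b := b) (u := u)
      have h2 := aug_degree_le (G := G) (a := a) (b := b) (u := v)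
      have h3 := G.minDegree_le_degree u
      have h4 := G.minDegree_le_degree v
      omega
  -- rotate so that the extra vertex is first
  obtain ⟨t, ht⟩ := hco.rotate_to (hco.2.1 none)
  obtain ⟨hnd, hmem, hch, hwrap⟩ := ht
  have hnonet : (none : Option V) ∉ t := (List.nodup_cons.mp hnd).1
  obtain ⟨t₀, rfl⟩ := exists_map_some hnonet
  have ht₀nd : t₀.Nodup := List.Nodup.of_map some (List.nodup_cons.mp hnd).2
  have ht₀mem : ∀ v : V, v ∈ t₀ := by
    intro v
    have h := hmem (some v)
    simp only [List.mem_cons, List.mem_map, Option.some_inj] at h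
    rcases h with h | ⟨w, hw, rfl⟩
    · exact absurd h (by simp)
    · exact hw
  have hlen : t₀.length = Fintype.card V := by
    have h1 : t₀.toFinset = Finset.univ :=
      Finset.eq_univ_iff_forall.mpr (fun v => by simp [ht₀mem v])
    rw [← List.toFinset_card_of_nodup ht₀nd, h1, Finset.card_univ]
  obtain ⟨c1, t₁, rfl⟩ : ∃ c1 t₁, t₀ = c1 :: t₁ := by
    cases t₀ with
    | nil => simp at hlen; omega
    | cons c1 t₁ => exact ⟨c1, t₁, rfl⟩
  have ht₁ne : t₁ ≠ [] := by
    intro h; subst h; simp at hlen; omega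
  -- the inner chain
  have hchain0 : (c1 :: t₁).IsChain G.Adj := by
    have h := hch.tail
    simp only [List.tail_cons] at h
    rw [List.isChain_map] at h
    exact h
  -- the first and last vertices are a or b
  have hc1 : c1 = a ∨ c1 = b := by
    have h := (List.isChain_cons.mp hch).1 (some c1) (by simp)
    exact h
  set lst := t₁.getLast ht₁ne with hlstdef
  have hlstmem : lst ∈ t₁ := List.getLast_mem ht₁ne
  have hlastq : ((none : Option V) :: (c1 :: t₁).map some).getLast? = some (some lst) := by
    rw [_root_.getLast?_cons_of_ne_nil (by simp), List.getLast?_map]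
    rw [List.getLast?_eq_getLast (List.cons_ne_nil _ _)]
    simp only [Option.map_some]
    rw [List.getLast_cons ht₁ne]
  have hlst : lst = a ∨ lst = b := hwrap _ none hlastq (by simp)
  have hc1lst : c1 ≠ lst := by
    intro h
    exact (List.nodup_cons.mp ht₀nd).1 (h ▸ hlstmem)
  have hgl : (c1 :: t₁).getLast? = some lst := by
    rw [List.getLast?_eq_getLast (List.cons_ne_nil _ _), List.getLast_cons ht₁ne]
  rcases hc1 with rfl | rfl
  · -- c1 = a, so lst = b
    have hlb : lst = b := by
      rcases hlst with h | h
      · exact absurd h.symm hc1lst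
      · exact h
    refine ham_walk_of_list G (c1 :: t₁) ht₀nd ht₀mem hchain0 (by simp) ?_
    rw [hgl, hlb]
  · -- c1 = b, so lst = a : use the reversed list
    have hla : lst = a := by
      rcases hlst with h | h
      · exact h
      · exact absurd h.symm hc1lst
    refine ham_walk_of_list G (c1 :: t₁).reverse
      (List.nodup_reverse.mpr ht₀nd) (fun v => List.mem_reverse.mpr (ht₀mem v))
      (chain'_reverse_of_symm hchain0) ?_ ?_
    · rw [List.head?_reverse, hgl, hla]
    · rw [List.getLast?_reverse]
      simp
end

section
/- Let n, r ≥ 1 be integers, let φ be an r-edge-colouring of the complete graph K_n, and let v₀ be any vertex. Suppose that K_n contains no switch, i.e., no 4-cycle in which exactly two colours each appear an odd number of times. Then the vertices of K_n other than v₀ can be partitioned into (possibly empty) sets V₁, …, V_r such that each induced subgraph on V_i is a monochromatic clique, all these cliques have the same colour, and for every pair i ≠ j all edges between V_i and V_j receive a single common colour. -/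
open SimpleGraph

/-- A 4-cycle `u v x y u` (on pairwise distinct vertices) is a *switch* for the edge-colouring
`φ` of `K_n` if exactly two colours each appear an odd number of times among its four edges
(and all other colours appear an even number of times). -/
def IsSwitch {n r : ℕ} (φ : Sym2 (Fin n) → Fin r) (u v x y : Fin n) : Prop :=
  ([u, v, x, y] : List (Fin n)).Nodup ∧
    ∃ c₁ c₂ : Fin r, c₁ ≠ c₂ ∧
      ∀ c : Fin r,
        Odd (([s(u, v), s(v, x), s(x, y), s(y, u)].map φ).count c) ↔ (c = c₁ ∨ c = c₂)

lemma cnt1 {r : ℕ} (a b e c : Fin r) (hab : a ≠ b) :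
    Odd (([e, a, b, e] : List (Fin r)).count c) ↔ c = a ∨ c = b := by
  by_cases h1 : c = a <;> by_cases h2 : c = b <;> by_cases h3 : c = e <;>
    simp_all [List.count_cons, Nat.odd_iff] <;> split_ifs <;> simp_all

lemma cnt2 {r : ℕ} (a b e c : Fin r) (hab : a ≠ b) :
    Odd (([a, e, b, e] : List (Fin r)).count c) ↔ c = a ∨ c = b := by
  by_cases h1 : c = a <;> by_cases h2 : c = b <;> by_cases h3 : c = e <;>
    simp_all [List.count_cons, Nat.odd_iff] <;> split_ifs <;> simp_all

section
variable {n r : ℕ} {φ : Sym2 (Fin n) → Fin r}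

lemma key_opp (hsw : ∀ u v x y : Fin n, ¬IsSwitch φ u v x y) {u v x y : Fin n}
    (hnd : ([u, v, x, y] : List (Fin n)).Nodup) (h : φ s(v, x) = φ s(y, u)) :
    φ s(u, v) = φ s(x, y) := by
  by_contra hab
  refine hsw u v x y ⟨hnd, φ s(u, v), φ s(x, y), hab, fun c => ?_⟩
  have hm : ([s(u, v), s(v, x), s(x, y), s(y, u)].map φ)
      = [φ s(u, v), φ s(v, x), φ s(x, y), φ s(v, x)] := by simp [h]
  rw [hm]
  exact cnt2 _ _ _ _ hab

lemma same_cls (hsw : ∀ u v x y : Fin n, ¬IsSwitch φ u v x y) {v₀ x y z : Fin n}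
    (hx : x ≠ v₀) (hy : y ≠ v₀) (hz : z ≠ v₀) (hxy : x ≠ y) (hzx : z ≠ x) (hzy : z ≠ y)
    (hc : φ s(v₀, x) = φ s(v₀, y)) : φ s(x, z) = φ s(z, y) := by
  by_contra hab
  refine hsw v₀ x z y ⟨?_, φ s(x, z), φ s(z, y), hab, fun c => ?_⟩
  · simp [hx.symm, hy.symm, hz.symm, hxy, hzx.symm, hzy]
  · have hm : ([s(v₀, x), s(x, z), s(z, y), s(y, v₀)].map φ)
        = [φ s(x, z), φ s(z, y), φ s(v₀, x)].cons (φ s(v₀, x)) := by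
      simp [Sym2.eq_swap (a := y) (b := v₀), ← hc]
    rw [hm]
    exact cnt1 _ _ _ _ hab
end

section
variable {n r : ℕ} {φ : Sym2 (Fin n) → Fin r} {v₀ : Fin n}

lemma moveH (hsw : ∀ u v x y : Fin n, ¬IsSwitch φ u v x y) {x y y' : Fin n}
    (hx : x ≠ v₀) (hy : y ≠ v₀) (hy' : y' ≠ v₀) (hxy : x ≠ y) (hxy' : x ≠ y')
    (hc : φ s(v₀, y) = φ s(v₀, y')) : φ s(x, y) = φ s(x, y') := by
  by_cases h : y = y'
  · rw [h]
  · have := same_cls hsw hy hy' hx h hxy hxy' hc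
    rwa [Sym2.eq_swap (a := y)] at this

lemma masterC (hsw : ∀ u v x y : Fin n, ¬IsSwitch φ u v x y) {x y x' y' : Fin n}
    (hx : x ≠ v₀) (hy : y ≠ v₀) (hx' : x' ≠ v₀) (hy' : y' ≠ v₀)
    (hxy : x ≠ y) (hxy' : x' ≠ y')
    (h1 : φ s(v₀, x) = φ s(v₀, y)) (h2 : φ s(v₀, x') = φ s(v₀, y')) :
    φ s(x, y) = φ s(x', y') := by
  by_cases hcls : φ s(v₀, x) = φ s(v₀, x')
  · -- all four in the same class
    by_cases e1 : x' = y
    · subst e1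
      by_cases e2 : x = y'
      · subst e2; rw [Sym2.eq_swap]
      · have := moveH hsw hy hx hy' hxy.symm hxy'
          (h1 ▸ hcls ▸ h2)
        rw [Sym2.eq_swap (a := x), this]
    · by_cases e2 : x' = x
      · subst e2
        exact moveH hsw hx hy hy' hxy hxy' (h1 ▸ h2)
      · have s1 : φ s(y, x) = φ s(y, x') :=
          moveH hsw hy hx hx' hxy.symm (fun h => e1 h.symm) hcls
        have s2 : φ s(x', y) = φ s(x', y') :=
          moveH hsw hx' hy hy' (fun h => e1 h) hxy' (h1 ▸ hcls ▸ h2)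
        rw [Sym2.eq_swap (a := x), s1, Sym2.eq_swap (a := y), s2]
  · -- different classes: x,y,x',y' pairwise distinct
    have hxx' : x ≠ x' := fun h => hcls (h ▸ rfl)
    have hxy'' : x ≠ y' := fun h => hcls (h2 ▸ h ▸ rfl)
    have hyx' : y ≠ x' := fun h => hcls (h1.trans (h ▸ rfl))
    have hyy' : y ≠ y' := fun h => hcls (h1.trans (h2 ▸ h ▸ rfl))
    have hnd : ([x, y, x', y'] : List (Fin n)).Nodup := by
      simp [hxy, hxx', hxy'', hyx', hyy', hxy']
    have e1 : φ s(x', y) = φ s(x', x) :=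
      moveH hsw hx' hy hx hyx'.symm (fun h => hxx' h.symm) h1.symm
    have e2 : φ s(x, x') = φ s(x, y') :=
      moveH hsw hx hx' hy' hxx' hxy'' h2
    have hedge : φ s(y, x') = φ s(y', x) := by
      rw [Sym2.eq_swap (a := y), e1, Sym2.eq_swap (a := x'), e2, Sym2.eq_swap (a := x)]
    exact key_opp hsw hnd hedge

end

/-- If an `r`-edge-colouring `φ` of `K_n` contains no switch, then for any vertex `v₀` the
remaining vertices can be partitioned into sets `V₁, …, V_r` such that each `V_i` induces a
monochromatic clique, all these cliques have the same colour, and for `i ≠ j` all edges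
between `V_i` and `V_j` receive a single common colour. -/
theorem switch_free_structure (n r : ℕ) (hn : 1 ≤ n) (hr : 1 ≤ r)
    (φ : Sym2 (Fin n) → Fin r) (v₀ : Fin n)
    (hsw : ∀ u v x y : Fin n, ¬IsSwitch φ u v x y) :
    ∃ Vp : Fin r → Finset (Fin n),
      (∀ i j, i ≠ j → Disjoint (Vp i) (Vp j)) ∧
      Finset.univ.erase v₀ = Finset.univ.biUnion Vp ∧
      (∃ c₀ : Fin r, ∀ i, ∀ x ∈ Vp i, ∀ y ∈ Vp i, x ≠ y → φ s(x, y) = c₀) ∧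
      (∀ i j, i ≠ j → ∃ c : Fin r, ∀ x ∈ Vp i, ∀ y ∈ Vp j, φ s(x, y) = c) := by
  classical
  set Vp : Fin r → Finset (Fin n) :=
    fun i => Finset.univ.filter (fun v => v ≠ v₀ ∧ φ s(v₀, v) = i) with hVp
  have hmem : ∀ i v, v ∈ Vp i ↔ v ≠ v₀ ∧ φ s(v₀, v) = i := by
    intro i v; simp [hVp]
  refine ⟨Vp, ?_, ?_, ?_, ?_⟩
  · intro i j hij
    rw [Finset.disjoint_left]
    intro a ha hb
    rw [hmem] at ha hb
    exact hij (ha.2 ▸ hb.2 ▸ rfl)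
  · ext v
    simp only [Finset.mem_erase, Finset.mem_univ, and_true, Finset.mem_biUnion]
    constructor
    · intro hv; exact ⟨φ s(v₀, v), by simp, (hmem _ _).2 ⟨hv, rfl⟩⟩
    · rintro ⟨i, -, hi⟩; exact ((hmem _ _).1 hi).1
  · by_cases hp : ∃ x y : Fin n, x ≠ v₀ ∧ y ≠ v₀ ∧ x ≠ y ∧ φ s(v₀, x) = φ s(v₀, y)
    · obtain ⟨x₀, y₀, hx₀, hy₀, hxy₀, hc₀⟩ := hp
      refine ⟨φ s(x₀, y₀), fun i x hx y hy hxy => ?_⟩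
      rw [hmem] at hx hy
      exact masterC hsw hx.1 hy.1 hx₀ hy₀ hxy hxy₀ (hx.2.trans hy.2.symm) hc₀
    · refine ⟨⟨0, hr⟩, fun i x hx y hy hxy => absurd ?_ hp⟩
      rw [hmem] at hx hy
      exact ⟨x, y, hx.1, hy.1, hxy, hx.2.trans hy.2.symm⟩
  · intro i j hij
    by_cases hi : (Vp i).Nonempty
    · by_cases hj : (Vp j).Nonempty
      · obtain ⟨x₀, hx₀⟩ := hi
        obtain ⟨y₀, hy₀⟩ := hj
        rw [hmem] at hx₀ hy₀
        refine ⟨φ s(x₀, y₀), fun x hx y hy => ?_⟩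
        rw [hmem] at hx hy
        have hxy : x ≠ y := fun h => hij (hx.2 ▸ hy.2 ▸ h ▸ rfl)
        have hxy₀ : x ≠ y₀ := fun h => hij (hx.2 ▸ hy₀.2 ▸ h ▸ rfl)
        have hx₀y₀ : y₀ ≠ x₀ := fun h => hij (by rw [← hx₀.2, ← hy₀.2, h])
        have e1 : φ s(x, y) = φ s(x, y₀) :=
          moveH hsw hx.1 hy.1 hy₀.1 hxy hxy₀ (hy.2.trans hy₀.2.symm)
        have e2 : φ s(y₀, x) = φ s(y₀, x₀) :=
          moveH hsw hy₀.1 hx.1 hx₀.1 hxy₀.symm hx₀y₀ (hx.2.trans hx₀.2.symm)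
        rw [e1, Sym2.eq_swap (a := x), e2, Sym2.eq_swap (a := y₀)]
      · exact ⟨⟨0, hr⟩, fun x hx y hy => absurd ⟨y, hy⟩ hj⟩
    · exact ⟨⟨0, hr⟩, fun x hx y hy => absurd ⟨x, hx⟩ hi⟩
end

section
/- Let φ be an r-edge-colouring of K_n containing no switch, and let v₀ be a fixed vertex. For each colour i let V_i be the set of vertices v with φ(v₀v) = i. Then for all (not necessarily distinct) i, j, all edges of K_n with one endpoint in V_i and the other in V_j receive the same colour. -/
open SimpleGraph

lemma key {n r : ℕ} (φ : Sym2 (Fin n) → Fin r) (v₀ : Fin n)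
    (hsw : ∀ u v x y : Fin n, ¬IsSwitch φ u v x y)
    (x y y' : Fin n) (hx : x ≠ v₀) (hy : y ≠ v₀) (hy' : y' ≠ v₀)
    (hyx : y ≠ x) (hy'x : y' ≠ x)
    (hc : φ s(v₀, y) = φ s(v₀, y')) : φ s(x, y) = φ s(x, y') := by
  by_cases hyy : y = y'
  · subst hyy; rfl
  by_contra hne
  apply hsw v₀ y x y'
  refine ⟨by simp [hx.symm, hy.symm, hy'.symm, hyx.symm, hy'x.symm, hyy, Ne, eq_comm], ?_⟩
  set j := φ s(v₀, y) with hj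
  set a := φ s(x, y) with ha
  set b := φ s(x, y') with hb
  have e1 : φ s(y, x) = a := by rw [ha, Sym2.eq_swap]
  have e2 : φ s(y', v₀) = j := by rw [Sym2.eq_swap, ← hc]
  by_cases haj : a = j
  · -- b ≠ j since a ≠ b
    refine ⟨j, b, fun h => hne (haj.trans h), fun c => ?_⟩
    simp only [List.map_cons, List.map_nil, e1, e2, ← hc, ← hj, ← hb, List.count_cons,
      List.count_nil, haj, beq_iff_eq]
    by_cases h1 : j = c <;> by_cases h2 : b = c <;>
      simp_all [eq_comm, Nat.odd_iff]
  · by_cases hbj : b = j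
    · refine ⟨a, j, haj, fun c => ?_⟩
      simp only [List.map_cons, List.map_nil, e1, e2, ← hc, ← hj, ← hb, List.count_cons,
        List.count_nil, hbj, beq_iff_eq]
      by_cases h1 : j = c <;> by_cases h2 : a = c <;>
        simp_all [eq_comm, Nat.odd_iff]
    · refine ⟨a, b, hne, fun c => ?_⟩
      simp only [List.map_cons, List.map_nil, e1, e2, ← hc, ← hj, ← hb, List.count_cons,
        List.count_nil, beq_iff_eq]
      by_cases h1 : j = c <;> by_cases h2 : a = c <;> by_cases h3 : b = c <;>
        simp_all [eq_comm, Nat.odd_iff]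

/-- If an `r`-edge-colouring `φ` of `K_n` contains no switch and `v₀` is a fixed vertex,
then, writing `V_i = {v ≠ v₀ | φ(v₀v) = i}`, for all (not necessarily distinct) colours
`i, j`, all edges with one endpoint in `V_i` and the other in `V_j` receive the same
colour. -/
theorem switch_free_bipartite_monochromatic (n r : ℕ)
    (φ : Sym2 (Fin n) → Fin r) (v₀ : Fin n)
    (hsw : ∀ u v x y : Fin n, ¬IsSwitch φ u v x y) :
    ∀ (i j : Fin r) (x y x' y' : Fin n),
      x ≠ v₀ → φ s(v₀, x) = i → y ≠ v₀ → φ s(v₀, y) = j →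
      x' ≠ v₀ → φ s(v₀, x') = i → y' ≠ v₀ → φ s(v₀, y') = j →
      x ≠ y → x' ≠ y' → φ s(x, y) = φ s(x', y') := by
  intro i j x y x' y' hx hxi hy hyj hx' hx'i hy' hy'j hxy hx'y'
  by_cases hy'x : y' = x
  · subst hy'x
    by_cases hx'y : x' = y
    · subst hx'y; rw [Sym2.eq_swap]
    · have h1 : φ s(y', y) = φ s(y', x') :=
        key φ v₀ hsw y' y x' hx hy hx' (Ne.symm hxy) hx'y'
          (by rw [hyj, hx'i, ← hxi, hy'j])
      rw [h1, Sym2.eq_swap]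
  · have h1 : φ s(x, y) = φ s(x, y') :=
      key φ v₀ hsw x y y' hx hy hy' (Ne.symm hxy) hy'x (by rw [hyj, hy'j])
    have h2 : φ s(y', x) = φ s(y', x') :=
      key φ v₀ hsw y' x x' hy' hx hx' (Ne.symm hy'x)
        hx'y' (by rw [hxi, hx'i])
    rw [h1, Sym2.eq_swap, h2, Sym2.eq_swap]
end

section
/- Consider the following edge-colouring of the complete graph on vertex set 𝔽₂^t × [m]: the edge between (0,m) and (v,x) gets colour x if x > 1 and colour 0 ∈ 𝔽₂^t if x = 1; every other edge, between (v₁,x₁) and (v₂,x₂), gets colour v₁ + v₂ ∈ 𝔽₂^t. Then every Hamilton cycle in this colouring has some colour appearing an odd number of times on it. -/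
open SimpleGraph

/-- The colouring of the complete graph on `𝔽₂^t × [m]` from the upper-bound construction:
the distinguished vertex is `(0, m)` (here `(0, ⟨m-1⟩)`, with `Fin m` representing
`[m] = {1, …, m}` so that index `0` is the element `1` and index `m-1` is the element `m`);
the edge between `(0, m)` and `(v, x)` gets colour `x` (i.e. `Sum.inr x`) if `x > 1`, and
colour `0 ∈ 𝔽₂^t` (i.e. `Sum.inl 0`) if `x = 1`; every other edge, between `(v₁, x₁)` and
`(v₂, x₂)`, gets colour `v₁ + v₂ ∈ 𝔽₂^t`. -/
def cayleyCol (m t : ℕ) (hm : 1 ≤ m) (a b : (Fin t → ZMod 2) × Fin m) :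
    (Fin t → ZMod 2) ⊕ Fin m :=
  if a = ((0 : Fin t → ZMod 2), (⟨m - 1, by omega⟩ : Fin m)) then
    (if b.2.val = 0 then Sum.inl 0 else Sum.inr b.2)
  else if b = ((0 : Fin t → ZMod 2), (⟨m - 1, by omega⟩ : Fin m)) then
    (if a.2.val = 0 then Sum.inl 0 else Sum.inr a.2)
  else Sum.inl (a.1 + b.1)

private lemma list_sum_ite' {α M : Type*} [AddCommMonoid M] (p : α → Prop) [DecidablePred p]
    (f : α → M) (L : List α) :
    (L.map (fun x => if p x then f x else 0)).sum = ((L.filter (fun x => p x)).map f).sum := by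
  induction L with
  | nil => simp
  | cons a L ih => by_cases h : p a <;> simp [h, ih, List.filter_cons]

private lemma list_len_cast {α : Type*} (p : α → Prop) [DecidablePred p] (L : List α) :
    ((L.filter (fun x => p x)).length : ZMod 2)
      = (L.map (fun x => if p x then (1 : ZMod 2) else 0)).sum := by
  induction L with
  | nil => simp
  | cons a L ih => by_cases h : p a <;> simp [h, ih, List.filter_cons, add_comm]

private lemma even_cast_zmod2 {n : ℕ} (h : Even n) : (n : ZMod 2) = 0 := by
  obtain ⟨k, rfl⟩ := h
  push_cast
  rw [show (k : ZMod 2) + k = k * 2 by ring, show ((2:ZMod 2)) = 0 from rfl, mul_zero]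

private lemma telescope {V : Type*} {G : SimpleGraph V} {A : Type*} [AddCommMonoid A]
    (h2 : ∀ x : A, x + x = 0) (χ : V → A) :
    ∀ {a b : V} (p : G.Walk a b),
      (p.darts.map (fun d => χ d.fst + χ d.snd)).sum = χ a + χ b := by
  intro a b p
  induction p with
  | nil => simp [h2]
  | @cons a c b h p ih =>
      simp only [SimpleGraph.Walk.darts_cons, List.map_cons, List.sum_cons, ih]
      have : χ a + χ c + (χ c + χ b) = χ a + (χ c + χ c) + χ b := by abel
      rw [this, h2, add_zero]

private lemma classes_sum {α β : Type*} [Fintype β] [DecidableEq β] {M : Type*} [AddCommMonoid M]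
    (g : α → β) (f : β → M) (L : List α) :
    (L.map (fun x => f (g x))).sum
      = ∑ c : β, ((L.filter (fun x => g x = c)).length) • f c := by
  induction L with
  | nil => simp
  | cons a L ih =>
      simp only [List.map_cons, List.sum_cons, ih, List.filter_cons]
      rw [show f (g a) + ∑ c : β, ((L.filter (fun x => g x = c)).length) • f c
            = ∑ c : β, ((if g a = c then 1 else 0) + (L.filter (fun x => g x = c)).length) • f c by
        simp only [add_smul, Finset.sum_add_distrib]
        congr 1
        rw [show ∑ c : β, (if g a = c then 1 else 0 : ℕ) • f c
              = ∑ c : β, (if g a = c then f c else 0) from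
          Finset.sum_congr rfl (fun c _ => by by_cases h : g a = c <;> simp [h])]
        simp]
      apply Finset.sum_congr rfl
      intro c _
      by_cases h : g a = c <;> simp [h, add_comm]

private lemma even_smul_zero {M : Type*} [AddCommMonoid M] (h2 : ∀ x : M, x + x = 0)
    {n : ℕ} (h : Even n) (x : M) : n • x = 0 := by
  obtain ⟨k, rfl⟩ := h
  rw [add_nsmul]
  induction k with
  | zero => simp
  | succ k ih =>
      rw [succ_nsmul, show k • x + x + (k • x + x) = (k • x + k • x) + (x + x) by abel,
        ih, h2, add_zero]

private lemma filter_eq_count {α β : Type*} [DecidableEq β] (f : α → β) (b : β) (L : List α) :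
    (L.filter (fun x => f x = b)).length = (L.map f).count b := by
  induction L with
  | nil => simp
  | cons a L ih => by_cases h : f a = b <;> simp [h, ih, List.filter_cons, List.count_cons]

private lemma two_darts {V : Type*} [DecidableEq V] {G : SimpleGraph V} {u : V}
    {w : G.Walk u u} (hw : w.IsHamiltonianCycle) :
    ∃ d₁ d₂ : G.Dart,
      w.darts.filter (fun d => d.fst = u) = [d₁] ∧
      w.darts.filter (fun d => d.snd = u) = [d₂] ∧
      d₁.fst = u ∧ ¬ d₁.snd = u ∧ ¬ d₂.fst = u ∧ d₂.snd = u ∧ d₁.snd ≠ d₂.fst := by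
  have htail : ∀ z, w.support.tail.count z = 1 :=
    (Walk.isHamiltonianCycle_iff_isCycle_and_support_count_tail_eq_one.mp hw).2
  have hlen3 : 3 ≤ w.length := hw.isCycle.three_le_length
  have hsupc : w.support = u :: w.support.tail := w.support_eq_cons
  have htne : w.support.tail ≠ [] := by
    intro h
    have h1 := w.length_support
    rw [hsupc, h, List.length_cons, List.length_nil] at h1
    omega
  obtain ⟨x, xs, hxs⟩ : ∃ x xs, w.support.tail = x :: xs := by
    cases h : w.support.tail with
    | nil => exact absurd h htne
    | cons x xs => exact ⟨x, xs, rfl⟩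
  have hgl : w.support.tail.getLast htne = u := by
    have h2 : w.support.getLast? = some u := by
      rw [List.getLast?_eq_getLast (by simp), w.getLast_support]
    rw [hsupc, hxs, List.getLast?_cons_cons, ← hxs] at h2
    rw [List.getLast?_eq_getLast htne] at h2
    exact Option.some_injective _ h2
  have hcd : w.support.tail.dropLast.count u = 0 := by
    have hsplit := List.dropLast_append_getLast htne
    have := htail u
    rw [← hsplit] at this
    rw [List.count_append, hgl] at this
    simp at this
    exact this
  have hsndlen : (w.darts.filter (fun d => d.snd = u)).length = 1 := by
    rw [filter_eq_count (fun d : G.Dart => d.snd) u w.darts]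
    rw [show (w.darts.map (fun d : G.Dart => d.snd)) = w.support.tail from w.map_snd_darts]
    exact htail u
  obtain ⟨d₂, hd₂⟩ := List.length_eq_one_iff.mp hsndlen
  have hd₂mem : d₂ ∈ w.darts := List.mem_of_mem_filter (by rw [hd₂]; simp)
  have hd₂snd : d₂.snd = u := by
    have := List.of_mem_filter (show d₂ ∈ w.darts.filter (fun d => d.snd = u) by rw [hd₂]; simp)
    simpa using this
  have hd₂fst : ¬ d₂.fst = u := by
    have := d₂.adj.ne
    rw [hd₂snd] at this
    exact this
  have hfstlen : (w.darts.filter (fun d => d.fst = u)).length = 1 := by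
    rw [filter_eq_count (fun d : G.Dart => d.fst) u w.darts]
    rw [show (w.darts.map (fun d : G.Dart => d.fst)) = w.support.dropLast from w.map_fst_darts]
    rw [hsupc, hxs, List.dropLast_cons₂, List.count_cons_self, ← hxs]
    rw [hcd]
  obtain ⟨d₁, hd₁⟩ := List.length_eq_one_iff.mp hfstlen
  have hd₁mem : d₁ ∈ w.darts := List.mem_of_mem_filter (by rw [hd₁]; simp)
  have hd₁fst : d₁.fst = u := by
    have := List.of_mem_filter (show d₁ ∈ w.darts.filter (fun d => d.fst = u) by rw [hd₁]; simp)
    simpa using this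
  have hd₁snd : ¬ d₁.snd = u := by
    have := d₁.adj.ne
    rw [hd₁fst] at this
    exact fun h => this h.symm
  refine ⟨d₁, d₂, hd₁, hd₂, hd₁fst, hd₁snd, hd₂fst, hd₂snd, ?_⟩
  intro hab
  have hne : d₁ ≠ d₂ := fun h => hd₂fst (by rw [← h, hd₁fst])
  have hedges : w.edges.Nodup := hw.isCycle.isCircuit.isTrail.edges_nodup
  have hmapnodup : (w.darts.map Dart.edge).Nodup := by
    rwa [show w.darts.map Dart.edge = w.edges from rfl]
  have hedge : d₁.edge = d₂.edge := by
    have h1 : d₁.edge = s(d₁.fst, d₁.snd) := rfl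
    have h2 : d₂.edge = s(d₂.fst, d₂.snd) := rfl
    rw [h1, h2, hd₁fst, hd₂snd, ← hab, Sym2.eq_swap]
  exact hne (List.inj_on_of_nodup_map hmapnodup hd₁mem hd₂mem hedge)

private lemma sum_two_darts {V : Type*} [DecidableEq V] {G : SimpleGraph V} {u : V}
    {M : Type*} [AddCommMonoid M] (f : G.Dart → M) {L : List G.Dart} {d₁ d₂ : G.Dart}
    (h1 : L.filter (fun d => d.fst = u) = [d₁])
    (h2 : L.filter (fun d => d.snd = u) = [d₂])
    (hd2 : ¬ d₂.fst = u)
    (hvan : ∀ d ∈ L, ¬ d.fst = u → ¬ d.snd = u → f d = 0) :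
    (L.map f).sum = f d₁ + f d₂ := by
  have key : ∀ d ∈ L, f d = (if d.fst = u then f d else 0)
      + (if d.snd = u then (if d.fst = u then 0 else f d) else 0) := by
    intro d hd
    by_cases hf : d.fst = u
    · by_cases hs : d.snd = u <;> simp [hf, hs]
    · by_cases hs : d.snd = u
      · simp [hf, hs]
      · simp [hf, hs, hvan d hd hf hs]
  rw [List.map_congr_left key, List.sum_map_add,
    list_sum_ite' (fun d : G.Dart => d.fst = u) f L,
    list_sum_ite' (fun d : G.Dart => d.snd = u) (fun d => if d.fst = u then 0 else f d) L,
    h1, h2]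
  simp [hd2]

/-- In the colouring `cayleyCol` of the complete graph on `𝔽₂^t × [m]`, every Hamilton cycle
has some colour appearing an odd number of times on it. -/
theorem cayleyCol_odd (m t : ℕ) (hm : 1 ≤ m) :
    ∀ (v : (Fin t → ZMod 2) × Fin m)
      (w : (⊤ : SimpleGraph ((Fin t → ZMod 2) × Fin m)).Walk v v),
      w.IsHamiltonianCycle →
      ∃ c : (Fin t → ZMod 2) ⊕ Fin m,
        Odd ((w.darts.filter (fun d => cayleyCol m t hm d.fst d.snd = c)).length) := by
  intro v w hw
  by_contra hcon
  push_neg at hcon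
  have heven : ∀ c, Even ((w.darts.filter
      (fun d => cayleyCol m t hm d.fst d.snd = c)).length) := by
    intro c
    rcases Nat.even_or_odd ((w.darts.filter
      (fun d => cayleyCol m t hm d.fst d.snd = c)).length) with h | h
    · exact h
    · exact absurd h (hcon c)
  set u : (Fin t → ZMod 2) × Fin m := ((0 : Fin t → ZMod 2), (⟨m - 1, by omega⟩ : Fin m))
    with hu
  have humem : u ∈ w.support := hw.mem_support u
  set w' := w.rotate u humem with hw'def
  have hperm : w'.darts.Perm w.darts := (w.rotate_darts u humem).perm
  have hw'ham : w'.IsHamiltonianCycle := by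
    rw [Walk.isHamiltonianCycle_iff_isCycle_and_support_count_tail_eq_one]
    refine ⟨hw.isCycle.rotate humem, fun z => ?_⟩
    rw [hw'def]
    exact (@List.Perm.count_eq _ instBEqOfDecidableEq _ _ (w.support_rotate u humem).perm z).trans <| (Walk.isHamiltonianCycle_iff_isCycle_and_support_count_tail_eq_one.mp hw).2 z
  have heven' : ∀ c, Even ((w'.darts.filter
      (fun d => cayleyCol m t hm d.fst d.snd = c)).length) := by
    intro c
    rw [(hperm.filter _).length_eq]
    exact heven c
  obtain ⟨d₁, d₂, hf1, hf2, hd₁f, hd₁s, hd₂f, hd₂s, hne⟩ := two_darts hw'ham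
  -- colour of the two darts at u
  have hcol1 : cayleyCol m t hm d₁.fst d₁.snd
      = (if d₁.snd.2.val = 0 then Sum.inl 0 else Sum.inr d₁.snd.2) := by
    rw [cayleyCol, if_pos hd₁f]
  have hcol2 : cayleyCol m t hm d₂.fst d₂.snd
      = (if d₂.fst.2.val = 0 then Sum.inl 0 else Sum.inr d₂.fst.2) := by
    rw [cayleyCol, if_neg hd₂f, if_pos hd₂s]
  have hvancol : ∀ d : (⊤ : SimpleGraph ((Fin t → ZMod 2) × Fin m)).Dart,
      ¬ d.fst = u → ¬ d.snd = u →
      cayleyCol m t hm d.fst d.snd = Sum.inl (d.fst.1 + d.snd.1) := by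
    intro d h1 h2
    rw [cayleyCol, if_neg h1, if_neg h2]
  -- Step 1: second coordinates of the two neighbours agree
  have hiff : ∀ x : Fin m, (cayleyCol m t hm d₁.fst d₁.snd = Sum.inr x ↔
      cayleyCol m t hm d₂.fst d₂.snd = Sum.inr x) := by
    intro x
    have hsum : (w'.darts.map (fun d =>
        if cayleyCol m t hm d.fst d.snd = Sum.inr x then (1 : ZMod 2) else 0)).sum
        = (if cayleyCol m t hm d₁.fst d₁.snd = Sum.inr x then (1 : ZMod 2) else 0)
          + (if cayleyCol m t hm d₂.fst d₂.snd = Sum.inr x then (1 : ZMod 2) else 0) := by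
      refine sum_two_darts _ hf1 hf2 hd₂f ?_
      intro d _ h1 h2
      rw [if_neg]
      rw [hvancol d h1 h2]
      simp
    rw [← list_len_cast (fun d => cayleyCol m t hm d.fst d.snd = Sum.inr x) w'.darts] at hsum
    rw [even_cast_zmod2 (heven' (Sum.inr x))] at hsum
    constructor
    · intro h1
      by_contra h2
      rw [if_pos h1, if_neg h2, add_zero] at hsum
      exact one_ne_zero hsum.symm
    · intro h2
      by_contra h1
      rw [if_neg h1, if_pos h2, zero_add] at hsum
      exact one_ne_zero hsum.symm
  have hsnd2 : d₁.snd.2 = d₂.fst.2 := by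
    by_cases ha : d₁.snd.2.val = 0 <;> by_cases hb : d₂.fst.2.val = 0
    · exact Fin.ext (by rw [ha, hb])
    · exfalso
      have h2 : cayleyCol m t hm d₂.fst d₂.snd = Sum.inr d₂.fst.2 := by
        rw [hcol2, if_neg hb]
      have h1 := (hiff d₂.fst.2).mpr h2
      rw [hcol1, if_pos ha] at h1
      exact Sum.inl_ne_inr h1
    · exfalso
      have h1 : cayleyCol m t hm d₁.fst d₁.snd = Sum.inr d₁.snd.2 := by
        rw [hcol1, if_neg ha]
      have h2 := (hiff d₁.snd.2).mp h1
      rw [hcol2, if_pos hb] at h2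
      exact Sum.inl_ne_inr h2
    · have h1 : cayleyCol m t hm d₁.fst d₁.snd = Sum.inr d₁.snd.2 := by
        rw [hcol1, if_neg ha]
      have h2 := (hiff d₁.snd.2).mp h1
      rw [hcol2, if_neg hb] at h2
      exact (Sum.inr_injective h2).symm
  -- Step 2: first coordinates agree
  have h2grp : ∀ x : Fin t → ZMod 2, x + x = 0 := by
    intro x
    funext i
    have : ∀ y : ZMod 2, y + y = 0 := by decide
    exact this (x i)
  have hfst1 : d₁.snd.1 = d₂.fst.1 := by
    set fcol : (Fin t → ZMod 2) ⊕ Fin m → (Fin t → ZMod 2) :=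
      Sum.elim id (fun _ => 0) with hfcol
    have hsum : (w'.darts.map (fun d =>
        (d.fst.1 + d.snd.1) + fcol (cayleyCol m t hm d.fst d.snd))).sum
        = ((d₁.fst.1 + d₁.snd.1) + fcol (cayleyCol m t hm d₁.fst d₁.snd))
          + ((d₂.fst.1 + d₂.snd.1) + fcol (cayleyCol m t hm d₂.fst d₂.snd)) := by
      refine sum_two_darts _ hf1 hf2 hd₂f ?_
      intro d _ h1 h2
      rw [hvancol d h1 h2]
      exact h2grp _
    rw [List.sum_map_add] at hsum
    rw [telescope h2grp (fun z => z.1) w'] at hsum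
    rw [classes_sum (fun d : (⊤ : SimpleGraph ((Fin t → ZMod 2) × Fin m)).Dart =>
      cayleyCol m t hm d.fst d.snd) fcol w'.darts] at hsum
    rw [Finset.sum_congr rfl (fun c _ => even_smul_zero h2grp (heven' c) (fcol c))] at hsum
    simp only [Finset.sum_const_zero, add_zero] at hsum
    -- fcol of the two u-dart colours is 0
    have hc1 : fcol (cayleyCol m t hm d₁.fst d₁.snd) = 0 := by
      rw [hcol1]
      by_cases ha : d₁.snd.2.val = 0 <;> simp [ha, hfcol]
    have hc2 : fcol (cayleyCol m t hm d₂.fst d₂.snd) = 0 := by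
      rw [hcol2]
      by_cases hb : d₂.fst.2.val = 0 <;> simp [hb, hfcol]
    rw [hc1, hc2, add_zero, add_zero, hd₁f, hd₂s] at hsum
    have hu1 : u.1 = 0 := rfl
    rw [hu1, zero_add, add_zero] at hsum
    -- hsum : 0 = d₁.snd.1 + (d₂.fst.1 + 0)? check; we want x + y = 0 → x = y
    have hxy : d₁.snd.1 + d₂.fst.1 = 0 := by simpa using hsum.symm
    have : d₁.snd.1 + d₂.fst.1 + d₂.fst.1 = d₂.fst.1 := by rw [hxy, zero_add]
    rwa [add_assoc, h2grp, add_zero] at this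
  exact hne (Prod.ext hfst1 hsnd2)
end

section
/- For every even integer n ≥ 4 and every integer 1 ≤ k ≤ n/2, there exists an n-vertex graph G with minimum degree n/2 + k - 1 and a 2k-edge-colouring of G in which every Hamilton cycle has some colour class of odd size. Hence r_odd(n, n/2 + k - 1; C_n) ≤ 2k. -/
open SimpleGraph

/-- An `r`-edge-colouring `φ` of a graph `G` on `Fin n` is *odd* (for the Hamilton cycle) if
every Hamilton cycle of `G` meets some colour class in an odd number of edges. -/
def IsOddColouringOn {n r : ℕ} (G : SimpleGraph (Fin n)) (φ : Sym2 (Fin n) → Fin r) : Prop :=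
  ∀ (v : Fin n) (w : G.Walk v v), w.IsHamiltonianCycle →
    ∃ c : Fin r, Odd ((w.edges.filter (fun e => φ e = c)).length)

/-- The sparse odd-Ramsey number `r_odd(n, δ; C_n)`: the minimum over `n`-vertex graphs `G`
with minimum degree at least `δ` of the least number of colours needed to edge-colour `G` so
that every Hamilton cycle of `G` has an odd colour class. -/
noncomputable def oddRamseyMinDeg (n δ : ℕ) : ℕ :=
  sInf {r | ∃ G : SimpleGraph (Fin n),
    (∀ v : Fin n, δ ≤ {u | G.Adj v u}.ncard) ∧
    ∃ φ : Sym2 (Fin n) → Fin r, IsOddColouringOn G φ}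

/-! ### Auxiliary walk lemmas -/

private lemma walk_getVert_eq_support_getD {V : Type*} {G : SimpleGraph V} {x y : V}
    (p : G.Walk x y) (j : ℕ) : p.getVert j = p.support.getD j y := by
  induction p generalizing j with
  | nil =>
    cases j with
    | zero => rfl
    | succ j => simp [SimpleGraph.Walk.getVert_of_length_le]
  | cons h q ih =>
    cases j with
    | zero => simp [SimpleGraph.Walk.getVert_zero, SimpleGraph.Walk.support_cons]
    | succ j =>
      rw [SimpleGraph.Walk.getVert_cons_succ, SimpleGraph.Walk.support_cons,
        List.getD_cons_succ]
      exact ih j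

private lemma walk_edges_getElem {V : Type*} {G : SimpleGraph V} {x y : V}
    (p : G.Walk x y) (j : ℕ) (hj : j < p.length) :
    p.edges[j]'(by rwa [SimpleGraph.Walk.length_edges]) =
      s(p.getVert j, p.getVert (j + 1)) := by
  induction p generalizing j with
  | nil => simp at hj
  | cons h q ih =>
    cases j with
    | zero =>
      simp [SimpleGraph.Walk.edges_cons, SimpleGraph.Walk.getVert_zero,
        SimpleGraph.Walk.getVert_cons_succ]
    | succ j =>
      have hj' : j < q.length := by
        simpa [SimpleGraph.Walk.length_cons, Nat.succ_lt_succ_iff] using hj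
      simpa [SimpleGraph.Walk.edges_cons, SimpleGraph.Walk.getVert_cons_succ] using ih j hj'

/-! ### The construction

`bGraph n a m` is the graph on `Fin n` obtained from the complete graph by deleting all
edges between the block `A = [0, a)` and the block `B = [a, a+m)`.  The remaining vertices
`S = [a+m, n)` are joined to everything. -/

private def bGraph (n a m : ℕ) : SimpleGraph (Fin n) where
  Adj u v := u ≠ v ∧ ¬((u : ℕ) < a ∧ a ≤ (v : ℕ) ∧ (v : ℕ) < a + m)
    ∧ ¬((v : ℕ) < a ∧ a ≤ (u : ℕ) ∧ (u : ℕ) < a + m)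
  symm := by
    constructor
    intro u v h
    exact ⟨h.1.symm, h.2.2, h.2.1⟩
  loopless := by
    constructor
    intro v h
    exact h.1 rfl

private def bCol {n : ℕ} (a m r : ℕ) (hr : 0 < r) (v : Fin n) : Fin r :=
  ⟨((v : ℕ) - (a + m) + 1) % r, Nat.mod_lt _ hr⟩

/-- The colouring: an edge from an `S`-vertex `s` to a `B`-vertex gets colour
`bCol s`; every other edge gets colour `0`. -/
private def bPhi {n : ℕ} (a m r : ℕ) (hr : 0 < r) : Sym2 (Fin n) → Fin r :=
  Sym2.lift ⟨fun u v =>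
    if a ≤ (u : ℕ) ∧ (u : ℕ) < a + m ∧ a + m ≤ (v : ℕ) then bCol a m r hr v
    else if a ≤ (v : ℕ) ∧ (v : ℕ) < a + m ∧ a + m ≤ (u : ℕ) then bCol a m r hr u
    else ⟨0, hr⟩, by
      intro u v
      dsimp only
      by_cases h1 : a ≤ (u : ℕ) ∧ (u : ℕ) < a + m ∧ a + m ≤ (v : ℕ)
      · by_cases h2 : a ≤ (v : ℕ) ∧ (v : ℕ) < a + m ∧ a + m ≤ (u : ℕ)
        · exact absurd h1 (by omega)
        · rw [if_pos h1, if_neg h2, if_pos h1]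
      · by_cases h2 : a ≤ (v : ℕ) ∧ (v : ℕ) < a + m ∧ a + m ≤ (u : ℕ)
        · rw [if_neg h1, if_pos h2, if_pos h2]
        · rw [if_neg h1, if_neg h2, if_neg h2, if_neg h1]⟩

private lemma bPhi_mk {n : ℕ} (a m r : ℕ) (hr : 0 < r) (u v : Fin n) :
    bPhi a m r hr s(u, v) =
      (if a ≤ (u : ℕ) ∧ (u : ℕ) < a + m ∧ a + m ≤ (v : ℕ) then bCol a m r hr v
      else if a ≤ (v : ℕ) ∧ (v : ℕ) < a + m ∧ a + m ≤ (u : ℕ) then bCol a m r hr u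
      else ⟨0, hr⟩) := by
  rfl

/-- `bCol` is injective on `S = [a+m, n)` as long as `n - (a+m) ≤ r`. -/
private lemma bCol_injOnS {n : ℕ} {a m r : ℕ} (hr : 0 < r) (hS : n - (a + m) ≤ r)
    {x y : Fin n} (hx : a + m ≤ (x : ℕ)) (hy : a + m ≤ (y : ℕ))
    (hxy : bCol a m r hr x = bCol a m r hr y) : x = y := by
  have hx2 : (x : ℕ) < n := x.2
  have hy2 : (y : ℕ) < n := y.2
  set vx := (x : ℕ) - (a + m) + 1 with hvx
  set vy := (y : ℕ) - (a + m) + 1 with hvy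
  have hvx1 : 1 ≤ vx := by omega
  have hvx2 : vx ≤ r := by omega
  have hvy1 : 1 ≤ vy := by omega
  have hvy2 : vy ≤ r := by omega
  have hmod : vx % r = vy % r := by
    have := congrArg (fun z : Fin r => (z : ℕ)) hxy
    simpa [bCol] using this
  have hveq : vx = vy := by
    rcases eq_or_lt_of_le hvx2 with h | h
    · rcases eq_or_lt_of_le hvy2 with h' | h'
      · omega
      · rw [h, Nat.mod_self, Nat.mod_eq_of_lt h'] at hmod
        omega
    · rcases eq_or_lt_of_le hvy2 with h' | h'
      · rw [Nat.mod_eq_of_lt h, h', Nat.mod_self] at hmod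
        omega
      · rw [Nat.mod_eq_of_lt h, Nat.mod_eq_of_lt h'] at hmod
        exact hmod
  exact Fin.ext (by omega)

/-- Cardinality bound for an interval of `Fin n`. -/
private lemma ncard_interval_le (n lo hi : ℕ) :
    {u : Fin n | lo ≤ (u : ℕ) ∧ (u : ℕ) < hi}.ncard ≤ hi - lo := by
  classical
  rw [Set.ncard_eq_toFinset_card']
  have h1 : ({u : Fin n | lo ≤ (u : ℕ) ∧ (u : ℕ) < hi}).toFinset.card ≤
      (Finset.Ico lo hi).card := by
    refine Finset.card_le_card_of_injOn (fun u => (u : ℕ)) ?_ ?_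
    · intro u hu
      rw [Finset.mem_coe, Set.mem_toFinset] at hu
      simpa [Finset.mem_Ico] using hu
    · intro u _ v _ huv
      exact Fin.ext huv
  simpa [Nat.card_Ico] using h1

/-- Minimum degree bound for `bGraph`. -/
private lemma bDeg (n a m : ℕ) (v : Fin n) :
    (((v : ℕ) < a → n - 1 - m ≤ {u | (bGraph n a m).Adj v u}.ncard) ∧
    (a ≤ (v : ℕ) → (v : ℕ) < a + m → n - 1 - a ≤ {u | (bGraph n a m).Adj v u}.ncard) ∧
    (a + m ≤ (v : ℕ) → n - 1 ≤ {u | (bGraph n a m).Adj v u}.ncard)) := by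
  classical
  set S := {u | (bGraph n a m).Adj v u} with hSdef
  have hcard : S.ncard + Sᶜ.ncard = n := by
    have := Set.ncard_add_ncard_compl S
    simpa [Nat.card_eq_fintype_card] using this
  have hcompl : ∀ lo hi : ℕ,
      (Sᶜ ⊆ ({v} : Set (Fin n)) ∪ {u : Fin n | lo ≤ (u : ℕ) ∧ (u : ℕ) < hi}) →
      n - 1 - (hi - lo) ≤ S.ncard := by
    intro lo hi hsub
    have h1 : Sᶜ.ncard ≤ 1 + (hi - lo) := by
      refine le_trans (Set.ncard_le_ncard hsub (Set.toFinite _)) ?_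
      refine le_trans (Set.ncard_union_le _ _) ?_
      rw [Set.ncard_singleton]
      exact Nat.add_le_add_left (ncard_interval_le n lo hi) 1
    omega
  refine ⟨?_, ?_, ?_⟩
  · intro hv
    refine le_trans (le_of_eq (by omega)) (hcompl a (a + m) ?_)
    intro u hu
    simp only [Set.mem_compl_iff, hSdef, Set.mem_setOf_eq, bGraph] at hu
    by_cases huv : v = u
    · exact Or.inl (by simp [huv.symm])
    · right
      simp only [Set.mem_setOf_eq]
      push_neg at hu
      have := hu huv
      omega
  · intro hv1 hv2
    refine le_trans (le_of_eq (by omega)) (hcompl 0 a ?_)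
    intro u hu
    simp only [Set.mem_compl_iff, hSdef, Set.mem_setOf_eq, bGraph] at hu
    by_cases huv : v = u
    · exact Or.inl (by simp [huv.symm])
    · right
      simp only [Set.mem_setOf_eq]
      push_neg at hu
      have := hu huv
      omega
  · intro hv
    refine le_trans (le_of_eq (by omega)) (hcompl 0 0 ?_)
    intro u hu
    simp only [Set.mem_compl_iff, hSdef, Set.mem_setOf_eq, bGraph] at hu
    by_cases huv : v = u
    · exact Or.inl (by simp [huv.symm])
    · right
      simp only [Set.mem_setOf_eq]
      push_neg at hu
      have := hu huv
      omega

/-- The key combinatorial lemma: the colouring `bPhi` is odd for `bGraph`. -/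
private lemma bOdd (n a m k : ℕ) (hn : 4 ≤ n) (hk : 1 ≤ k)
    (hm1 : 1 ≤ m) (ham : a + m ≤ n) (hS : n - (a + m) ≤ 2 * k)
    (hA0 : a = 0 → m = 1) (hr : 0 < 2 * k) :
    IsOddColouringOn (bGraph n a m) (bPhi a m (2 * k) hr) := by
  classical
  intro v w hw
  have hn0 : 0 < n := by omega
  set x₀ : Fin n := ⟨0, hn0⟩ with hx₀
  have h0 : x₀ ∈ w.support := hw.mem_support x₀
  set w' := w.rotate x₀ h0 with hw'def
  have hc' : w'.IsCycle := hw.isCycle.rotate h0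
  have hlen : w'.length = n := by
    have h1 : w'.edges.length = w.edges.length :=
      (SimpleGraph.Walk.rotate_edges w x₀ h0).perm.length_eq
    have h2 := hw.length_eq
    rw [SimpleGraph.Walk.length_edges, SimpleGraph.Walk.length_edges] at h1
    rw [h1, h2, Fintype.card_fin]
  set u : ℕ → Fin n := fun j => w'.getVert j with hu
  have hu0 : u 0 = x₀ := w'.getVert_zero
  have hun : u n = x₀ := by
    have h := w'.getVert_length
    rw [hlen] at h
    exact h
  have hadj : ∀ j, j < n → (bGraph n a m).Adj (u j) (u (j + 1)) := by
    intro j hj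
    exact w'.adj_getVert_succ (by omega)
  set T := w'.support.tail with hT
  have hTnd : T.Nodup := hc'.support_nodup
  have hTlen : T.length = n := by
    rw [hT, List.length_tail, SimpleGraph.Walk.length_support, hlen]
    omega
  have hgetT : ∀ j, (hj : j < n) → u (j + 1) = T[j]'(by omega) := by
    intro j hj
    rw [hu]
    dsimp only
    rw [walk_getVert_eq_support_getD, SimpleGraph.Walk.support_eq_cons, List.getD_cons_succ,
      ← hT, List.getD_eq_getElem T x₀ (by omega)]
  have hinj : ∀ j₁ j₂, 1 ≤ j₁ → j₁ ≤ n → 1 ≤ j₂ → j₂ ≤ n → u j₁ = u j₂ → j₁ = j₂ := by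
    intro j₁ j₂ h11 h12 h21 h22 heq
    obtain ⟨i₁, rfl⟩ : ∃ i, j₁ = i + 1 := ⟨j₁ - 1, by omega⟩
    obtain ⟨i₂, rfl⟩ : ∃ i, j₂ = i + 1 := ⟨j₂ - 1, by omega⟩
    rw [hgetT i₁ (by omega), hgetT i₂ (by omega)] at heq
    have := (List.Nodup.getElem_inj_iff hTnd).mp heq
    omega
  have hsurj : ∀ x : Fin n, ∃ j, 1 ≤ j ∧ j ≤ n ∧ u j = x := by
    intro x
    have hx : x ∈ T := by
      have h1 : x ∈ w.support.tail := by
        have h2 := (SimpleGraph.Walk.isHamiltonianCycle_iff_isCycle_and_support_count_tail_eq_one.mp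
          hw).2 x
        exact List.count_pos_iff.mp (by omega)
      exact ((SimpleGraph.Walk.support_rotate w x₀ h0).mem_iff).mpr h1
    obtain ⟨i, hi, hix⟩ := List.mem_iff_getElem.mp hx
    refine ⟨i + 1, by omega, by omega, ?_⟩
    rw [hgetT i (by omega)]
    exact hix
  have hElen : w'.edges.length = n := by rw [SimpleGraph.Walk.length_edges, hlen]
  have hEget : ∀ j, (hj : j < n) → w'.edges[j]'(by omega) = s(u j, u (j + 1)) := by
    intro j hj
    exact walk_edges_getElem w' j (by omega)
  have hEmem : ∀ j, j < n → s(u j, u (j + 1)) ∈ w'.edges := by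
    intro j hj
    rw [← hEget j hj]
    exact List.getElem_mem _
  have hEchar : ∀ e ∈ w'.edges, ∃ j, j < n ∧ e = s(u j, u (j + 1)) := by
    intro e he
    obtain ⟨j, hj, hje⟩ := List.mem_iff_getElem.mp he
    have hj' : j < n := by omega
    exact ⟨j, hj', by rw [← hje, hEget j hj']⟩
  -- the two good positions
  have key : ∃ p₁ p₂ : ℕ, p₁ ≠ p₂ ∧
      (1 ≤ p₁ ∧ p₁ ≤ n - 1 ∧ a + m ≤ (u p₁ : ℕ) ∧
        (((a ≤ (u (p₁ - 1) : ℕ) ∧ (u (p₁ - 1) : ℕ) < a + m) ∧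
          ¬(a ≤ (u (p₁ + 1) : ℕ) ∧ (u (p₁ + 1) : ℕ) < a + m)) ∨
        (¬(a ≤ (u (p₁ - 1) : ℕ) ∧ (u (p₁ - 1) : ℕ) < a + m) ∧
          (a ≤ (u (p₁ + 1) : ℕ) ∧ (u (p₁ + 1) : ℕ) < a + m)))) ∧
      (1 ≤ p₂ ∧ p₂ ≤ n - 1 ∧ a + m ≤ (u p₂ : ℕ) ∧
        (((a ≤ (u (p₂ - 1) : ℕ) ∧ (u (p₂ - 1) : ℕ) < a + m) ∧
          ¬(a ≤ (u (p₂ + 1) : ℕ) ∧ (u (p₂ + 1) : ℕ) < a + m)) ∨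
        (¬(a ≤ (u (p₂ - 1) : ℕ) ∧ (u (p₂ - 1) : ℕ) < a + m) ∧
          (a ≤ (u (p₂ + 1) : ℕ) ∧ (u (p₂ + 1) : ℕ) < a + m)))) := by
    have hx₀val : (x₀ : ℕ) = 0 := rfl
    by_cases ha : a = 0
    · -- A empty, B = {x₀}
      have hm : m = 1 := hA0 ha
      have hne : ∀ j, 1 ≤ j → j ≤ n - 1 → ¬((u j : ℕ) < a + m) := by
        intro j hj1 hj2 hcon
        have h1 : u j = x₀ := Fin.ext (by omega)
        rw [← hun] at h1
        have := hinj j n hj1 (by omega) (by omega) le_rfl h1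
        omega
      refine ⟨1, n - 1, by omega, ⟨le_rfl, by omega, ?_, Or.inl ⟨?_, ?_⟩⟩,
        ⟨by omega, le_rfl, ?_, Or.inr ⟨?_, ?_⟩⟩⟩
      · have := hne 1 le_rfl (by omega); omega
      · have h0 : (1 : ℕ) - 1 = 0 := rfl
        rw [h0, hu0]; omega
      · have h2 : (1 : ℕ) + 1 = 2 := rfl
        rw [h2]
        have := hne 2 (by omega) (by omega); omega
      · have := hne (n - 1) (by omega) le_rfl; omega
      · have h1 : n - 1 - 1 = n - 2 := by omega
        rw [h1]
        have := hne (n - 2) (by omega) (by omega); omega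
      · have h1 : n - 1 + 1 = n := by omega
        rw [h1, hun]; omega
    · -- A nonempty; start vertex x₀ lies in A
      have ha1 : 1 ≤ a := by omega
      have hbex : ∃ j, a ≤ (u j : ℕ) ∧ (u j : ℕ) < a + m := by
        obtain ⟨j, _, _, hj⟩ := hsurj ⟨a, by omega⟩
        refine ⟨j, ?_, ?_⟩ <;> rw [hj] <;> simp <;> omega
      have hPbn : ¬ (a ≤ (u n : ℕ) ∧ (u n : ℕ) < a + m) := by rw [hun]; omega
      have hPb0 : ¬ (a ≤ (u 0 : ℕ) ∧ (u 0 : ℕ) < a + m) := by rw [hu0]; omega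
      have hjle : ∀ j, (a ≤ (u j : ℕ) ∧ (u j : ℕ) < a + m) → j ≤ n := by
        intro j hj
        by_contra hcon
        have h1 : u j = x₀ := by
          show w'.getVert j = x₀
          rw [SimpleGraph.Walk.getVert_of_length_le w' (by omega)]
        rw [h1] at hj
        exact absurd hj (by omega)
      obtain ⟨j₀, hj₀⟩ := hbex
      have hj₀n : j₀ ≤ n := hjle j₀ hj₀
      have hbex' : ∃ j, a ≤ (u j : ℕ) ∧ (u j : ℕ) < a + m := ⟨j₀, hj₀⟩
      obtain ⟨q, hqspec, hqmin, hqj₀⟩ :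
          ∃ q, (a ≤ (u q : ℕ) ∧ (u q : ℕ) < a + m) ∧
            (∀ i, i < q → ¬ (a ≤ (u i : ℕ) ∧ (u i : ℕ) < a + m)) ∧ q ≤ j₀ :=
        ⟨Nat.find hbex', Nat.find_spec hbex', fun i hi => Nat.find_min hbex' hi,
          Nat.find_min' hbex' hj₀⟩
      have hqn : q ≤ n := le_trans hqj₀ hj₀n
      have hqne : q ≠ n := fun h => hPbn (h ▸ hqspec)
      have hq0 : q ≠ 0 := fun h => hPb0 (h ▸ hqspec)
      have hq1 : q ≠ 1 := by
        intro h1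
        have h2 := hadj 0 (by omega)
        rw [hu0] at h2
        obtain ⟨-, hno, -⟩ := h2
        rw [h1] at hqspec
        have h3 : (0 : ℕ) + 1 = 1 := rfl
        rw [h3] at hno
        exact hno ⟨by omega, hqspec.1, hqspec.2⟩
      obtain ⟨q', hq'spec, hq'le, hgr, hqq'⟩ :
          ∃ q', (a ≤ (u q' : ℕ) ∧ (u q' : ℕ) < a + m) ∧ q' ≤ n ∧
            (∀ i, q' < i → i ≤ n → ¬ (a ≤ (u i : ℕ) ∧ (u i : ℕ) < a + m)) ∧ q ≤ q' :=
        ⟨Nat.findGreatest (fun j => a ≤ (u j : ℕ) ∧ (u j : ℕ) < a + m) n,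
          Nat.findGreatest_spec (P := fun j => a ≤ (u j : ℕ) ∧ (u j : ℕ) < a + m) hqn hqspec,
          Nat.findGreatest_le n,
          fun i h1 h2 =>
            Nat.findGreatest_is_greatest (P := fun j => a ≤ (u j : ℕ) ∧ (u j : ℕ) < a + m) h1 h2,
          Nat.le_findGreatest hqn hqspec⟩
      have hq'ne : q' ≠ n := fun h => hPbn (h ▸ hq'spec)
      have hq'1 : q' + 1 ≠ n := by
        intro h1
        have h2 := hadj q' (by omega)
        obtain ⟨-, -, hno⟩ := h2
        rw [h1, hun] at hno
        exact hno ⟨by omega, hq'spec.1, hq'spec.2⟩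
      -- p₁ = q - 1, p₂ = q' + 1
      have hSq : a + m ≤ (u (q - 1) : ℕ) := by
        have h1 := hqmin (q - 1) (by omega)
        have h2 := hadj (q - 1) (by omega)
        have h3 : q - 1 + 1 = q := by omega
        rw [h3] at h2
        obtain ⟨-, hno, -⟩ := h2
        by_contra hcon
        rcases Nat.lt_or_ge (u (q - 1) : ℕ) a with h | h
        · exact hno ⟨h, hqspec.1, hqspec.2⟩
        · exact h1 ⟨h, by omega⟩
      have hSq' : a + m ≤ (u (q' + 1) : ℕ) := by
        have h1 := hgr (q' + 1) (by omega) (by omega)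
        have h2 := hadj q' (by omega)
        obtain ⟨-, -, hno⟩ := h2
        by_contra hcon
        rcases Nat.lt_or_ge (u (q' + 1) : ℕ) a with h | h
        · exact hno ⟨h, hq'spec.1, hq'spec.2⟩
        · exact h1 ⟨h, by omega⟩
      refine ⟨q - 1, q' + 1, by omega, ⟨by omega, by omega, hSq, Or.inr ⟨?_, ?_⟩⟩,
        ⟨by omega, by omega, hSq', Or.inl ⟨?_, ?_⟩⟩⟩
      · exact hqmin (q - 1 - 1) (by omega)
      · have h3 : q - 1 + 1 = q := by omega
        rw [h3]
        exact hqspec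
      · have h3 : q' + 1 - 1 = q' := by omega
        rw [h3]
        exact hq'spec
      · exact hgr (q' + 1 + 1) (by omega) (by omega)
  -- pick the good position with nonzero colour
  obtain ⟨p₁, p₂, hpne, hg₁, hg₂⟩ := key
  have hne12 : u p₁ ≠ u p₂ := by
    intro h
    exact hpne (hinj p₁ p₂ hg₁.1 (by omega) hg₂.1 (by omega) h)
  have hgood : ∃ p, (1 ≤ p ∧ p ≤ n - 1 ∧ a + m ≤ (u p : ℕ) ∧
      (((a ≤ (u (p - 1) : ℕ) ∧ (u (p - 1) : ℕ) < a + m) ∧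
        ¬(a ≤ (u (p + 1) : ℕ) ∧ (u (p + 1) : ℕ) < a + m)) ∨
      (¬(a ≤ (u (p - 1) : ℕ) ∧ (u (p - 1) : ℕ) < a + m) ∧
        (a ≤ (u (p + 1) : ℕ) ∧ (u (p + 1) : ℕ) < a + m)))) ∧
      bCol a m (2 * k) hr (u p) ≠ ⟨0, hr⟩ := by
    by_cases hc1 : bCol a m (2 * k) hr (u p₁) = ⟨0, hr⟩
    · refine ⟨p₂, hg₂, ?_⟩
      intro hc2
      exact hne12 (bCol_injOnS hr hS hg₁.2.2.1 hg₂.2.2.1 (hc1.trans hc2.symm))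
    · exact ⟨p₁, hg₁, hc1⟩
  obtain ⟨p, ⟨hp1, hp2, hpS, hpat⟩, hcol0⟩ := hgood
  set i : Fin (2 * k) := bCol a m (2 * k) hr (u p) with hi
  -- in both patterns there is exactly one edge of colour i
  have hx₀S : ¬ (a + m ≤ (x₀ : ℕ)) := by
    have : (x₀ : ℕ) = 0 := rfl
    omega
  -- uniqueness of the S-endpoint via colour
  have hcolinj : ∀ z : Fin n, a + m ≤ (z : ℕ) → bCol a m (2 * k) hr z = i → z = u p := by
    intro z hz hcz
    exact bCol_injOnS hr hS hz hpS hcz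
  rcases hpat with ⟨hL, hR⟩ | ⟨hL, hR⟩
  · -- B-neighbour on the left: the unique colour-i edge is s(u (p-1), u p)
    set e₀ : Sym2 (Fin n) := s(u (p - 1), u p) with he₀
    have hmem0 : e₀ ∈ w'.edges := by
      have h1 := hEmem (p - 1) (by omega)
      have h2 : p - 1 + 1 = p := by omega
      rwa [h2] at h1
    have hphi0 : bPhi a m (2 * k) hr e₀ = i := by
      rw [he₀, bPhi_mk, if_pos ⟨hL.1, hL.2, hpS⟩]
    have huniq : ∀ e ∈ w'.edges, bPhi a m (2 * k) hr e = i → e = e₀ := by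
      intro e he hphie
      obtain ⟨j, hj, rfl⟩ := hEchar e he
      rw [bPhi_mk] at hphie
      by_cases c1 : a ≤ (u j : ℕ) ∧ (u j : ℕ) < a + m ∧ a + m ≤ (u (j + 1) : ℕ)
      · rw [if_pos c1] at hphie
        have hz := hcolinj (u (j + 1)) c1.2.2 hphie
        have hjp : j + 1 = p := hinj (j + 1) p (by omega) (by omega) (by omega) (by omega) hz
        have hj' : j = p - 1 := by omega
        have hp' : p - 1 + 1 = p := by omega
        rw [he₀, hj', hp']
      · rw [if_neg c1] at hphie
        by_cases c2 : a ≤ (u (j + 1) : ℕ) ∧ (u (j + 1) : ℕ) < a + m ∧ a + m ≤ (u j : ℕ)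
        · rw [if_pos c2] at hphie
          have hz := hcolinj (u j) c2.2.2 hphie
          have hj1 : 1 ≤ j := by
            rcases Nat.eq_zero_or_pos j with h | h
            · exfalso
              rw [h, hu0] at hz
              rw [← hz] at hpS
              exact hx₀S hpS
            · omega
          have hjp : j = p := hinj j p hj1 (by omega) (by omega) (by omega) hz
          exfalso
          rw [hjp] at c2
          exact hR ⟨c2.1, c2.2.1⟩
        · rw [if_neg c2] at hphie
          exact absurd hphie.symm hcol0
    -- conclude
    have hnodup : (w'.edges.filter (fun e => bPhi a m (2 * k) hr e = i)).Nodup :=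
      (hc'.isCircuit.isTrail.edges_nodup).filter _
    have hmemf : e₀ ∈ w'.edges.filter (fun e => bPhi a m (2 * k) hr e = i) :=
      List.mem_filter.mpr ⟨hmem0, by simp [hphi0]⟩
    have hall : ∀ e ∈ w'.edges.filter (fun e => bPhi a m (2 * k) hr e = i), e = e₀ := by
      intro e he
      have h1 := List.mem_filter.mp he
      exact huniq e h1.1 (by simpa using h1.2)
    have hrep := List.eq_replicate_of_mem hall
    have hle1 : (w'.edges.filter (fun e => bPhi a m (2 * k) hr e = i)).length ≤ 1 := by
      rw [hrep] at hnodup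
      exact List.nodup_replicate.mp hnodup
    have hge1 : 1 ≤ (w'.edges.filter (fun e => bPhi a m (2 * k) hr e = i)).length :=
      List.length_pos_iff.mpr (List.ne_nil_of_mem hmemf)
    refine ⟨i, ?_⟩
    have hperm : (w.edges.filter (fun e => bPhi a m (2 * k) hr e = i)).length =
        (w'.edges.filter (fun e => bPhi a m (2 * k) hr e = i)).length :=
      ((SimpleGraph.Walk.rotate_edges w x₀ h0).perm.filter _).length_eq.symm
    rw [hperm]
    have : (w'.edges.filter (fun e => bPhi a m (2 * k) hr e = i)).length = 1 := by omega
    rw [this]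
    exact odd_one
  · -- B-neighbour on the right: the unique colour-i edge is s(u p, u (p+1))
    set e₀ : Sym2 (Fin n) := s(u p, u (p + 1)) with he₀
    have hmem0 : e₀ ∈ w'.edges := hEmem p (by omega)
    have hphi0 : bPhi a m (2 * k) hr e₀ = i := by
      rw [he₀, bPhi_mk, if_neg (by omega), if_pos ⟨hR.1, hR.2, hpS⟩]
    have huniq : ∀ e ∈ w'.edges, bPhi a m (2 * k) hr e = i → e = e₀ := by
      intro e he hphie
      obtain ⟨j, hj, rfl⟩ := hEchar e he
      rw [bPhi_mk] at hphie
      by_cases c1 : a ≤ (u j : ℕ) ∧ (u j : ℕ) < a + m ∧ a + m ≤ (u (j + 1) : ℕ)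
      · rw [if_pos c1] at hphie
        have hz := hcolinj (u (j + 1)) c1.2.2 hphie
        have hjp : j + 1 = p := hinj (j + 1) p (by omega) (by omega) (by omega) (by omega) hz
        exfalso
        have hjval : j = p - 1 := by omega
        rw [hjval] at c1
        exact hL ⟨c1.1, c1.2.1⟩
      · rw [if_neg c1] at hphie
        by_cases c2 : a ≤ (u (j + 1) : ℕ) ∧ (u (j + 1) : ℕ) < a + m ∧ a + m ≤ (u j : ℕ)
        · rw [if_pos c2] at hphie
          have hz := hcolinj (u j) c2.2.2 hphie
          have hj1 : 1 ≤ j := by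
            rcases Nat.eq_zero_or_pos j with h | h
            · exfalso
              rw [h, hu0] at hz
              rw [← hz] at hpS
              exact hx₀S hpS
            · omega
          have hjp : j = p := hinj j p hj1 (by omega) (by omega) (by omega) hz
          rw [he₀, hjp]
        · rw [if_neg c2] at hphie
          exact absurd hphie.symm hcol0
    have hnodup : (w'.edges.filter (fun e => bPhi a m (2 * k) hr e = i)).Nodup :=
      (hc'.isCircuit.isTrail.edges_nodup).filter _
    have hmemf : e₀ ∈ w'.edges.filter (fun e => bPhi a m (2 * k) hr e = i) :=
      List.mem_filter.mpr ⟨hmem0, by simp [hphi0]⟩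
    have hall : ∀ e ∈ w'.edges.filter (fun e => bPhi a m (2 * k) hr e = i), e = e₀ := by
      intro e he
      have h1 := List.mem_filter.mp he
      exact huniq e h1.1 (by simpa using h1.2)
    have hrep := List.eq_replicate_of_mem hall
    have hle1 : (w'.edges.filter (fun e => bPhi a m (2 * k) hr e = i)).length ≤ 1 := by
      rw [hrep] at hnodup
      exact List.nodup_replicate.mp hnodup
    have hge1 : 1 ≤ (w'.edges.filter (fun e => bPhi a m (2 * k) hr e = i)).length :=
      List.length_pos_iff.mpr (List.ne_nil_of_mem hmemf)
    refine ⟨i, ?_⟩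
    have hperm : (w.edges.filter (fun e => bPhi a m (2 * k) hr e = i)).length =
        (w'.edges.filter (fun e => bPhi a m (2 * k) hr e = i)).length :=
      ((SimpleGraph.Walk.rotate_edges w x₀ h0).perm.filter _).length_eq.symm
    rw [hperm]
    have : (w'.edges.filter (fun e => bPhi a m (2 * k) hr e = i)).length = 1 := by omega
    rw [this]
    exact odd_one

/-- For every even `n ≥ 4` and `1 ≤ k ≤ n/2` there is an `n`-vertex graph of minimum degree
at least `n/2 + k - 1` together with a `2k`-edge-colouring in which every Hamilton cycle has
an odd colour class; hence `r_odd(n, n/2 + k - 1; C_n) ≤ 2k`. -/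
theorem oddRamseyMinDeg_le (n k : ℕ) (hn : 4 ≤ n) (he : Even n)
    (hk1 : 1 ≤ k) (hk2 : k ≤ n / 2) :
    (∃ (G : SimpleGraph (Fin n)) (φ : Sym2 (Fin n) → Fin (2 * k)),
      (∀ v : Fin n, n / 2 + k - 1 ≤ {u | G.Adj v u}.ncard) ∧ IsOddColouringOn G φ) ∧
    oddRamseyMinDeg n (n / 2 + k - 1) ≤ 2 * k := by
  have hr : 0 < 2 * k := by omega
  have hn2 : n / 2 * 2 = n := Nat.div_mul_cancel he.two_dvd
  set a := n / 2 - k with hadef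
  set m := max (n / 2 - k) 1 with hmdef
  have hm : (a = 0 ∧ m = 1) ∨ (1 ≤ a ∧ m = a) := by
    rcases Nat.eq_zero_or_pos (n / 2 - k) with h | h
    · left
      exact ⟨h, by rw [hmdef, h]; exact max_eq_right (Nat.zero_le 1)⟩
    · right
      exact ⟨h, by rw [hmdef, hadef]; exact max_eq_left h⟩
  have hdeg : ∀ v : Fin n, n / 2 + k - 1 ≤ {u | (bGraph n a m).Adj v u}.ncard := by
    intro v
    obtain ⟨d1, d2, d3⟩ := bDeg n a m v
    rcases Nat.lt_or_ge (v : ℕ) a with hv | hv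
    · exact le_trans (by omega) (d1 hv)
    · rcases Nat.lt_or_ge (v : ℕ) (a + m) with hv2 | hv2
      · exact le_trans (by omega) (d2 hv hv2)
      · exact le_trans (by omega) (d3 hv2)
  have hodd : IsOddColouringOn (bGraph n a m) (bPhi a m (2 * k) hr) := by
    apply bOdd n a m k hn hk1
    · omega
    · omega
    · omega
    · omega
  refine ⟨⟨bGraph n a m, bPhi a m (2 * k) hr, hdeg, hodd⟩, ?_⟩
  apply Nat.sInf_le
  exact ⟨bGraph n a m, hdeg, bPhi a m (2 * k) hr, hodd⟩
end

section
/- Let n ≥ 4 be even, let G be an n-vertex graph with minimum degree δ(G) ≥ n/2 + 2, and suppose the edges of G are 2-coloured. If G contains a 4-cycle on which both colours appear an odd number of times, then G contains a Hamilton cycle on which both colour classes have even size. -/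
open SimpleGraph
open List

namespace OddC4


variable {α : Type*}

/-- The list of edges (as `Sym2`) of consecutive pairs of a list. -/
def eo : List α → List (Sym2 α)
  | [] => []
  | [_] => []
  | x :: y :: t => s(x, y) :: eo (y :: t)

@[simp] lemma eo_nil : eo ([] : List α) = [] := rfl
@[simp] lemma eo_single (x : α) : eo [x] = [] := rfl
@[simp] lemma eo_cons_cons (x y : α) (t : List α) :
    eo (x :: y :: t) = s(x, y) :: eo (y :: t) := rfl

lemma eo_length : ∀ (l : List α), (eo l).length = l.length - 1
  | [] => rfl
  | [_] => rfl
  | x :: y :: t => by simp [eo_length (y :: t)]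

lemma eo_append : ∀ (l1 : List α) (h1 : l1 ≠ []) (l2 : List α) (h2 : l2 ≠ []),
    eo (l1 ++ l2) = eo l1 ++ s(l1.getLast h1, l2.head h2) :: eo l2
  | [], h1, _, _ => absurd rfl h1
  | [x], _, l2, h2 => by
      cases l2 with
      | nil => exact absurd rfl h2
      | cons y t => simp
  | x :: y :: t, _, l2, h2 => by
      have h := eo_append (y :: t) (by simp) l2 h2
      show eo (x :: ((y :: t) ++ l2)) = _
      rw [show x :: ((y :: t) ++ l2) = x :: y :: (t ++ l2) from rfl, eo_cons_cons]
      rw [show y :: (t ++ l2) = (y :: t) ++ l2 from rfl, h]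
      simp [List.getLast_cons_cons]

lemma eo_reverse : ∀ (l : List α), eo l.reverse = (eo l).reverse
  | [] => rfl
  | [_] => rfl
  | x :: y :: t => by
      have hrev : (x :: y :: t).reverse = (y :: t).reverse ++ [x] := by simp
      rw [hrev, eo_append ((y :: t).reverse) (by simp) [x] (by simp)]
      rw [eo_reverse (y :: t)]
      have hlast : ((y :: t).reverse).getLast (by simp) = y := by
        rw [List.getLast_reverse]
        simp
      simp [hlast, Sym2.eq_swap]

lemma mem_eo : ∀ {l : List α} {e : Sym2 α}, e ∈ eo l →
    ∃ a b l1 l2, e = s(a, b) ∧ l = l1 ++ a :: b :: l2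
  | [], _, h => by simp [eo] at h
  | [_], _, h => by simp [eo] at h
  | x :: y :: t, e, h => by
      rcases (List.mem_cons).1 h with h | h
      · exact ⟨x, y, [], t, h, rfl⟩
      · obtain ⟨a, b, l1, l2, he, hl⟩ := mem_eo h
        exact ⟨a, b, x :: l1, l2, he, by simp [hl]⟩

lemma head?_append_left {l1 l2 : List α} (h : l1 ≠ []) :
    (l1 ++ l2).head? = l1.head? := by
  cases l1 with
  | nil => exact absurd rfl h
  | cons x t => simp

lemma getLast?_append_right {l1 l2 : List α} (h : l2 ≠ []) :
    (l1 ++ l2).getLast? = l2.getLast? := by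
  rw [List.getLast?_eq_head?_reverse, List.getLast?_eq_head?_reverse, List.reverse_append,
    head?_append_left (by simpa using h)]

/-- decomposition of a list of length ≥ 2 with given head and last -/
lemma decomp2 {l : List α} {x y : α} (hlen : 2 ≤ l.length)
    (hx : l.head? = some x) (hy : l.getLast? = some y) :
    ∃ M, l = x :: M ++ [y] := by
  cases l with
  | nil => simp at hx
  | cons a t =>
    have hax : a = x := by simpa using hx
    have ht : t ≠ [] := by
      cases t with
      | nil => simp at hlen
      | cons b t' => simp
    have h1 : t.dropLast ++ [t.getLast ht] = t := List.dropLast_append_getLast ht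
    have h2 : t.getLast ht = y := by
      have h4 := List.getLast?_eq_getLast (l := a :: t) (by simp)
      rw [h4] at hy
      have h3 : (a :: t).getLast (by simp) = t.getLast ht := List.getLast_cons ht
      rw [h3] at hy
      exact Option.some_injective _ hy
    rw [h2] at h1
    exact ⟨t.dropLast, by rw [hax]; exact congrArg _ h1.symm⟩

lemma head_getLast_nodup {l : List α} (hnd : l.Nodup) (h : l.head? = l.getLast?)
    (hne : l ≠ []) : l.length = 1 := by
  cases l with
  | nil => exact absurd rfl hne
  | cons a t =>
    cases t with
    | nil => rfl
    | cons b t' =>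
      exfalso
      have h1 : (a :: b :: t').getLast (by simp) = (b :: t').getLast (by simp) :=
        List.getLast_cons (by simp)
      have h2 : (a :: b :: t').getLast? = some ((b :: t').getLast (by simp)) := by
        rw [List.getLast?_eq_getLast (l := a :: b :: t') (by simp), h1]
      rw [h2] at h
      have ha : a = (b :: t').getLast (by simp) := by
        have : (a :: b :: t').head? = some a := rfl
        rw [this] at h
        exact Option.some_injective _ h
      have hmem : (b :: t').getLast (by simp) ∈ b :: t' := List.getLast_mem _
      rw [← ha] at hmem
      rw [List.nodup_cons] at hnd
      exact hnd.1 hmem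


variable {W : Type*} (H : SimpleGraph W) [DecidableRel H.Adj]

/-- edge indicator -/
def et (x y : W) : ℕ := if H.Adj x y then 1 else 0

lemma et_comm (x y : W) : et H x y = et H y x := by
  unfold et
  by_cases h : H.Adj x y
  · rw [if_pos h, if_pos h.symm]
  · rw [if_neg h, if_neg fun h' => h h'.symm]

/-- number of adjacent consecutive pairs -/
def wt (l : List W) : ℕ := ((eo l).filter (fun e => e ∈ H.edgeSet)).length

lemma wt_le (l : List W) (hne : l ≠ []) : wt H l + 1 ≤ l.length := by
  have h1 : wt H l ≤ (eo l).length := List.length_filter_le _ _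
  have h2 := eo_length (l := l)
  have h3 : 1 ≤ l.length := by
    rcases l with _ | _
    · exact absurd rfl hne
    · simp
  omega

lemma wt_append (l1 : List W) (h1 : l1 ≠ []) (l2 : List W) (h2 : l2 ≠ []) :
    wt H (l1 ++ l2) = wt H l1 + et H (l1.getLast h1) (l2.head h2) + wt H l2 := by
  unfold wt et
  rw [eo_append l1 h1 l2 h2, List.filter_append, List.length_append, List.filter_cons]
  by_cases h : H.Adj (l1.getLast h1) (l2.head h2) <;>
    simp [h, SimpleGraph.mem_edgeSet] <;> omega

lemma wt_reverse (l : List W) : wt H l.reverse = wt H l := by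
  unfold wt
  rw [eo_reverse]
  exact ((List.reverse_perm (eo l)).filter _).length_eq

lemma wt_append2 (l1 : List W) (x y : W) (l2 : List W) :
    wt H ((l1 ++ [x]) ++ (y :: l2)) = wt H (l1 ++ [x]) + et H x y + wt H (y :: l2) := by
  rw [wt_append H (l1 ++ [x]) (by simp) (y :: l2) (by simp)]
  congr 2
  · simpa using List.getLast_concat' l1 x

lemma wt_block (P M' B₀ : List W) (p q r s : W) :
    wt H ((P ++ [p]) ++ ((q :: (M' ++ [r])) ++ (s :: B₀)))
      = wt H (P ++ [p]) + et H p q + wt H (q :: (M' ++ [r])) + et H r s + wt H (s :: B₀) := by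
  have h1 : (q :: (M' ++ [r])) ++ (s :: B₀) = q :: ((M' ++ [r]) ++ (s :: B₀)) := by simp
  have h2 : ((P ++ [p]) ++ (q :: ((M' ++ [r]) ++ (s :: B₀))))
      = (P ++ [p]) ++ (q :: ((M' ++ [r]) ++ (s :: B₀))) := rfl
  rw [h1, wt_append2 H P p q ((M' ++ [r]) ++ (s :: B₀))]
  have h3 : (M' ++ [r]) ++ (s :: B₀) = M' ++ [r] ++ s :: B₀ := rfl
  have h4 : q :: ((M' ++ [r]) ++ (s :: B₀)) = ((q :: M') ++ [r]) ++ (s :: B₀) := by simp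
  rw [h4, wt_append2 H (q :: M') r s B₀]
  have h5 : (q :: M') ++ [r] = q :: (M' ++ [r]) := by simp
  rw [h5]
  omega


lemma surgery (l : List W) (d : W) (i j : ℕ) (hij : i + 1 < j) (hj : j + 1 < l.length)
    (h1 : H.Adj (l.getD i d) (l.getD j d))
    (h2 : H.Adj (l.getD (i + 1) d) (l.getD (j + 1) d))
    (h3 : ¬H.Adj (l.getD i d) (l.getD (i + 1) d) ∨ ¬H.Adj (l.getD j d) (l.getD (j + 1) d)) :
    ∃ l' : List W, l' ~ l ∧ l'.head? = l.head? ∧ l'.getLast? = l.getLast? ∧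
      wt H l + 1 ≤ wt H l' := by
  set m := l.length with hm
  have him : i + 1 < m := by omega
  set va := l.getD i d with hva
  set vb := l.getD (i + 1) d with hvb
  set vc := l.getD j d with hvc
  set vd := l.getD (j + 1) d with hvd
  set A := l.take (i + 1) with hA
  set S := (l.drop (i + 1)).take (j - i) with hS
  set B := (l.drop (i + 1)).drop (j - i) with hB
  have hBdrop : B = l.drop (j + 1) := by
    rw [hB, List.drop_drop]
    congr 1
    omega
  have hlenS : S.length = j - i := by
    rw [hS, List.length_take, List.length_drop]
    omega
  -- A = take i l ++ [va]
  have hAd : A = l.take i ++ [va] := by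
    rw [hA, List.take_succ, List.getElem?_eq_getElem (by omega : i < l.length)]
    rw [hva, List.getD_eq_getElem l d (by omega : i < l.length)]
    rfl
  -- S head? and getLast?
  have hSh : S.head? = some vb := by
    rw [List.head?_eq_getElem?, hS, List.getElem?_take, if_pos (by omega : 0 < j - i),
      List.getElem?_drop, List.getElem?_eq_getElem (by omega : i + 1 + 0 < l.length)]
    rw [hvb, List.getD_eq_getElem l d (by omega : i + 1 < l.length)]
  have hSl : S.getLast? = some vc := by
    rw [List.getLast?_eq_getElem?, hlenS, hS, List.getElem?_take,
      if_pos (by omega : j - i - 1 < j - i), List.getElem?_drop,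
      show i + 1 + (j - i - 1) = j by omega,
      List.getElem?_eq_getElem (by omega : j < l.length)]
    rw [hvc, List.getD_eq_getElem l d (by omega : j < l.length)]
  obtain ⟨M, hSd⟩ := decomp2 (by omega : 2 ≤ S.length) hSh hSl
  -- B = vd :: B₀
  have hBh : B.head? = some vd := by
    rw [hBdrop, List.head?_eq_getElem?, List.getElem?_drop,
      show j + 1 + 0 = j + 1 by omega,
      List.getElem?_eq_getElem (by omega : j + 1 < l.length)]
    rw [hvd, List.getD_eq_getElem l d (by omega : j + 1 < l.length)]
  obtain ⟨B₀, hBd⟩ : ∃ B₀, B = vd :: B₀ := by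
    cases hBc : B with
    | nil => rw [hBc] at hBh; simp at hBh
    | cons b t =>
      rw [hBc] at hBh
      simp only [List.head?_cons, Option.some_inj] at hBh
      exact ⟨t, by rw [hBh]⟩
  have hl : l = A ++ (S ++ B) := by
    rw [hA, hS, hB, List.take_append_drop, List.take_append_drop]
  set S' := vc :: (M.reverse ++ [vb]) with hS'
  have hS'rev : S' = (vb :: (M ++ [vc])).reverse := by
    simp [hS']
  set l' := A ++ (S' ++ B) with hl'
  have hSperm : S' ~ S := by
    rw [hSd, hS'rev]
    exact List.reverse_perm _
  refine ⟨l', ?_, ?_, ?_, ?_⟩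
  · rw [hl']
    conv_rhs => rw [hl]
    exact ((hSperm.append_right B).append_left A)
  · rw [hl']
    conv_rhs => rw [hl]
    have hAne : A ≠ [] := by
      rw [hAd]; simp
    rw [head?_append_left hAne, head?_append_left hAne]
  · rw [hl']
    conv_rhs => rw [hl]
    have hBne : (S' ++ B) ≠ [] := by simp [hS']
    have hBne2 : (S ++ B) ≠ [] := by rw [hBd]; simp
    have hBne3 : B ≠ [] := by rw [hBd]; simp
    rw [getLast?_append_right hBne, getLast?_append_right hBne2,
      getLast?_append_right hBne3, getLast?_append_right hBne3]
  · -- weight computation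
    have hwl : wt H l = wt H (l.take i ++ [va]) + et H va vb + wt H (vb :: (M ++ [vc]))
        + et H vc vd + wt H (vd :: B₀) := by
      conv_lhs => rw [hl, hAd, hSd, hBd]
      exact wt_block H (l.take i) M B₀ va vb vc vd
    have hwl' : wt H l' = wt H (l.take i ++ [va]) + et H va vc + wt H (vc :: (M.reverse ++ [vb]))
        + et H vb vd + wt H (vd :: B₀) := by
      conv_lhs => rw [hl', hAd, hBd, hS']
      exact wt_block H (l.take i) M.reverse B₀ va vc vb vd
    have hSwt : wt H (vc :: (M.reverse ++ [vb])) = wt H (vb :: (M ++ [vc])) := by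
      have hrev : vc :: (M.reverse ++ [vb]) = (vb :: (M ++ [vc])).reverse := by simp
      rw [hrev]
      exact wt_reverse H _
    have e1 : et H va vc = 1 := if_pos h1
    have e2 : et H vb vd = 1 := if_pos h2
    have e3 : et H va vb ≤ 1 := by unfold et; split <;> omega
    have e4 : et H vc vd ≤ 1 := by unfold et; split <;> omega
    have e5 : et H va vb = 0 ∨ et H vc vd = 0 := by
      rcases h3 with h | h
      · exact Or.inl (if_neg h)
      · exact Or.inr (if_neg h)
    omega


section Pos
variable [DecidableEq α]

/-- position-counting: elements of `N` (all in `l`, last excluded) give distinct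
positions `< l.length - 1` where the list value lies in `N`. -/
lemma pos_lemma_A (l : List α) (d : α) (hnd : l.Nodup) (hne : l ≠ []) (N : Finset α)
    (hN : ∀ y ∈ N, y ∈ l) (hb : l.getLast hne ∉ N) :
    N.card ≤ ((Finset.range (l.length - 1)).filter (fun k => l.getD k d ∈ N)).card := by
  apply Finset.card_le_card_of_injOn (fun y => l.idxOf y)
  · intro y hy
    have hyl : y ∈ l := hN y hy
    have hidx : l.idxOf y < l.length := List.idxOf_lt_length_iff.2 hyl
    have hval : l.getD (l.idxOf y) d = y := by
      rw [List.getD_eq_getElem l d hidx]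
      exact List.getElem_idxOf hidx
    have hlast : l.idxOf y ≠ l.length - 1 := by
      intro hcontra
      apply hb
      have hgd : l.getD (l.length - 1) d = y := by rw [← hcontra]; exact hval
      have : l.getLast hne = y := by
        rw [List.getLast_eq_getElem, ← List.getD_eq_getElem l d (by omega)]
        exact hgd
      rw [this]
      exact hy
    simp only [Finset.mem_coe, Finset.mem_filter, Finset.mem_range]
    exact ⟨by omega, by rw [hval]; exact hy⟩
  · intro y1 h1 y2 h2 heq
    exact (List.idxOf_inj (hN y1 h1)).1 heq

lemma pos_lemma_B (l : List α) (d : α) (hnd : l.Nodup) (hne : l ≠ []) (N : Finset α)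
    (hN : ∀ y ∈ N, y ∈ l) (hh : l.head hne ∉ N) :
    N.card ≤ ((Finset.range (l.length - 1)).filter (fun k => l.getD (k + 1) d ∈ N)).card := by
  apply Finset.card_le_card_of_injOn (fun y => l.idxOf y - 1)
  · intro y hy
    have hyl : y ∈ l := hN y hy
    have hidx : l.idxOf y < l.length := List.idxOf_lt_length_iff.2 hyl
    have hval : l.getD (l.idxOf y) d = y := by
      rw [List.getD_eq_getElem l d hidx]
      exact List.getElem_idxOf hidx
    have hpos : 0 < l.idxOf y := by
      rcases Nat.eq_zero_or_pos (l.idxOf y) with h0 | h0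
      · exfalso
        apply hh
        have hgd : l.getD 0 d = y := by rw [← h0]; exact hval
        have : l.head hne = y := by
          rw [List.head_eq_getElem_zero hne, ← List.getD_eq_getElem l d (by omega : 0 < l.length)]
          exact hgd
        rw [this]; exact hy
      · exact h0
    simp only [Finset.mem_coe, Finset.mem_filter, Finset.mem_range]
    constructor
    · omega
    · rw [show l.idxOf y - 1 + 1 = l.idxOf y by omega, hval]; exact hy
  · intro y1 h1 y2 h2 heq
    have hy1 : y1 ∈ l := hN y1 h1
    have hy2 : y2 ∈ l := hN y2 h2
    have e1 : l.idxOf y1 < l.length := List.idxOf_lt_length_iff.2 hy1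
    have e2 : l.idxOf y2 < l.length := List.idxOf_lt_length_iff.2 hy2
    have hposgen : ∀ (y : α), y ∈ ↑N → 0 < l.idxOf y := by
      intro y hy
      have hyl : y ∈ l := hN y hy
      have hidx : l.idxOf y < l.length := List.idxOf_lt_length_iff.2 hyl
      have hval : l.getD (l.idxOf y) d = y := by
        rw [List.getD_eq_getElem l d hidx]
        exact List.getElem_idxOf hidx
      rcases Nat.eq_zero_or_pos (l.idxOf y) with h0 | h0
      · exfalso
        apply hh
        have hgd : l.getD 0 d = y := by rw [← h0]; exact hval
        have : l.head hne = y := by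
          rw [List.head_eq_getElem_zero hne, ← List.getD_eq_getElem l d (by omega : 0 < l.length)]
          exact hgd
        rw [this]; exact hy
      · exact h0
    have p1 := hposgen y1 h1
    have p2 := hposgen y2 h2
    have heq2 : l.idxOf y1 = l.idxOf y2 := by
      simp only at heq; omega
    exact (List.idxOf_inj hy1).1 heq2

end Pos

section HamConn
variable [Fintype W] [DecidableEq W]

lemma erase_card_le (s : Finset W) (a : W) : s.card ≤ (s.erase a).card + 1 := by
  have hsub : s ⊆ insert a (s.erase a) := by
    intro x hx
    by_cases hxa : x = a
    · simp [hxa]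
    · simp [Finset.mem_insert, Finset.mem_erase, hxa, hx]
  calc s.card ≤ (insert a (s.erase a)).card := Finset.card_le_card hsub
    _ ≤ (s.erase a).card + 1 := Finset.card_insert_le _ _

lemma ham_conn_step (l : List W) (a b : W)
    (hdeg : ∀ v : W, Fintype.card W + 2 ≤ 2 * H.degree v)
    (hnd : l.Nodup) (hlen : l.length = Fintype.card W)
    (hhead : l.head? = some a) (hlast : l.getLast? = some b)
    (hnc : ¬ l.Chain' H.Adj) :
    ∃ l' : List W, l'.Nodup ∧ l'.length = Fintype.card W ∧ l'.head? = some a ∧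
      l'.getLast? = some b ∧ wt H l + 1 ≤ wt H l' := by
  classical
  have hne : l ≠ [] := by rintro rfl; simp at hhead
  -- failure point
  rw [List.Chain', List.isChain_iff_getElem] at hnc
  push_neg at hnc
  obtain ⟨i, hi, hnadj⟩ := hnc
  have hnadj' : ¬ H.Adj (l.getD i a) (l.getD (i + 1) a) := by
    rw [List.getD_eq_getElem l a (by omega), List.getD_eq_getElem l a (by omega)]
    exact hnadj
  -- all vertices occur in l
  have hall : ∀ x : W, x ∈ l := by
    intro x
    have h1 : l.toFinset.card = Fintype.card W := by
      rw [List.toFinset_card_of_nodup hnd]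
      exact hlen
    have := Finset.eq_univ_of_card _ h1
    rw [← List.mem_toFinset, this]
    exact Finset.mem_univ x
  have hlen1 : 1 ≤ l.length := by
    rcases l with _ | _
    · simp at hhead
    · simp
  have hlastval : l.getLast hne = l.getD (l.length - 1) a := by
    rw [List.getLast_eq_getElem, List.getD_eq_getElem l a (by omega)]
  have hheadval : l.head hne = l.getD 0 a := by
    rw [List.head_eq_getElem_zero hne, List.getD_eq_getElem l a (by omega)]
  set NA := (H.neighborFinset (l.getD i a)).erase (l.getLast hne) with hNA
  set NB := (H.neighborFinset (l.getD (i + 1) a)).erase (l.head hne) with hNB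
  have hcA := pos_lemma_A l a hnd hne NA (fun y _ => hall y) (by simp [hNA])
  have hcB := pos_lemma_B l a hnd hne NB (fun y _ => hall y) (by simp [hNB])
  set SA := (Finset.range (l.length - 1)).filter (fun k => H.Adj (l.getD i a) (l.getD k a)) with hSA
  set SB := (Finset.range (l.length - 1)).filter
      (fun k => H.Adj (l.getD (i + 1) a) (l.getD (k + 1) a)) with hSB
  have hsubA : ((Finset.range (l.length - 1)).filter (fun k => l.getD k a ∈ NA)) ⊆ SA := by
    intro k hk
    simp only [Finset.mem_filter, Finset.mem_range, hNA, Finset.mem_erase,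
      SimpleGraph.mem_neighborFinset] at hk
    simp only [hSA, Finset.mem_filter, Finset.mem_range]
    exact ⟨hk.1, hk.2.2⟩
  have hsubB : ((Finset.range (l.length - 1)).filter (fun k => l.getD (k + 1) a ∈ NB)) ⊆ SB := by
    intro k hk
    simp only [Finset.mem_filter, Finset.mem_range, hNB, Finset.mem_erase,
      SimpleGraph.mem_neighborFinset] at hk
    simp only [hSB, Finset.mem_filter, Finset.mem_range]
    exact ⟨hk.1, hk.2.2⟩
  have hcardA : H.degree (l.getD i a) ≤ SA.card + 1 := by
    have h1 : (H.neighborFinset (l.getD i a)).card ≤ NA.card + 1 := erase_card_le _ _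
    have h2 := hcA.trans (Finset.card_le_card hsubA)
    rw [SimpleGraph.card_neighborFinset_eq_degree] at h1
    omega
  have hcardB : H.degree (l.getD (i + 1) a) ≤ SB.card + 1 := by
    have h1 : (H.neighborFinset (l.getD (i + 1) a)).card ≤ NB.card + 1 := erase_card_le _ _
    have h2 := hcB.trans (Finset.card_le_card hsubB)
    rw [SimpleGraph.card_neighborFinset_eq_degree] at h1
    omega
  -- union bound
  have hiA : i ∉ SA := by
    simp only [hSA, Finset.mem_filter, Finset.mem_range, not_and]
    intro _
    exact fun h => H.irrefl h
  have hiB : i ∉ SB := by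
    simp only [hSB, Finset.mem_filter, Finset.mem_range, not_and]
    intro _
    exact fun h => H.irrefl h
  have hsubU : SA ∪ SB ⊆ (Finset.range (l.length - 1)).erase i := by
    intro k hk
    rcases Finset.mem_union.1 hk with hk | hk
    · simp only [Finset.mem_erase]
      refine ⟨fun hcontra => hiA (hcontra ▸ hk), ?_⟩
      simp only [hSA, Finset.mem_filter] at hk
      exact hk.1
    · simp only [Finset.mem_erase]
      refine ⟨fun hcontra => hiB (hcontra ▸ hk), ?_⟩
      simp only [hSB, Finset.mem_filter] at hk
      exact hk.1
  have hUcard : (SA ∪ SB).card ≤ l.length - 2 := by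
    have h1 := Finset.card_le_card hsubU
    have h2 : ((Finset.range (l.length - 1)).erase i).card = l.length - 2 := by
      rw [Finset.card_erase_of_mem (by simp only [Finset.mem_range]; omega), Finset.card_range]
      omega
    omega
  have hinter : 0 < (SA ∩ SB).card := by
    have h1 := Finset.card_union_add_card_inter SA SB
    have d1 := hdeg (l.getD i a)
    have d2 := hdeg (l.getD (i + 1) a)
    omega
  obtain ⟨j, hj⟩ := Finset.card_pos.1 hinter
  rw [Finset.mem_inter] at hj
  obtain ⟨hjA, hjB⟩ := hj
  simp only [hSA, Finset.mem_filter, Finset.mem_range] at hjA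
  simp only [hSB, Finset.mem_filter, Finset.mem_range] at hjB
  obtain ⟨hjm, hadjA⟩ := hjA
  obtain ⟨_, hadjB⟩ := hjB
  have hji : j ≠ i := fun hcontra => H.irrefl (hcontra ▸ hadjA)
  have hji1 : j ≠ i + 1 := by
    intro hcontra
    exact hnadj' (hcontra ▸ hadjA)
  have hj1i : j + 1 ≠ i := by
    intro hcontra
    exact hnadj' ((hcontra ▸ hadjB).symm)
  have him : i + 1 < l.length := by omega
  rcases Nat.lt_or_ge i j with hij | hij
  · -- i < j, and j ≠ i+1 so i+1 < j
    obtain ⟨l', hperm, hh, hl, hwt⟩ := surgery H l a i j (by omega) (by omega)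
      hadjA hadjB (Or.inl hnadj')
    exact ⟨l', hperm.symm.nodup hnd, by rw [hperm.length_eq]; exact hlen, by rw [hh, hhead],
      by rw [hl, hlast], hwt⟩
  · -- j < i, j+1 ≠ i so j + 1 < i
    obtain ⟨l', hperm, hh, hl, hwt⟩ := surgery H l a j i (by omega) (by omega)
      hadjA.symm hadjB.symm (Or.inr hnadj')
    exact ⟨l', hperm.symm.nodup hnd, by rw [hperm.length_eq]; exact hlen, by rw [hh, hhead],
      by rw [hl, hlast], hwt⟩

lemma ham_conn_aux : ∀ (t : ℕ) (l : List W) (a b : W),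
    (∀ v : W, Fintype.card W + 2 ≤ 2 * H.degree v) →
    l.Nodup → l.length = Fintype.card W → l.head? = some a → l.getLast? = some b →
    Fintype.card W ≤ wt H l + t →
    ∃ l' : List W, l'.Nodup ∧ l'.length = Fintype.card W ∧ l'.head? = some a ∧
      l'.getLast? = some b ∧ l'.Chain' H.Adj
  | 0, l, a, b, hdeg, hnd, hlen, hh, hl, hbound => by
      exfalso
      have hne : l ≠ [] := by rintro rfl; simp at hh
      have h1 := wt_le H l hne
      omega
  | (t + 1), l, a, b, hdeg, hnd, hlen, hh, hl, hbound => by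
      by_cases hch : l.Chain' H.Adj
      · exact ⟨l, hnd, hlen, hh, hl, hch⟩
      · obtain ⟨l', h1, h2, h3, h4, h5⟩ := ham_conn_step H l a b hdeg hnd hlen hh hl hch
        exact ham_conn_aux t l' a b hdeg h1 h2 h3 h4 (by omega)

/-- Hamilton-connectedness under a Dirac-type condition. -/
lemma ham_conn (a b : W) (hab : a ≠ b)
    (hdeg : ∀ v : W, Fintype.card W + 2 ≤ 2 * H.degree v) :
    ∃ l : List W, l.Nodup ∧ l.length = Fintype.card W ∧ l.head? = some a ∧
      l.getLast? = some b ∧ l.Chain' H.Adj := by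
  classical
  have hcard : 2 ≤ Fintype.card W := Fintype.one_lt_card_iff_nontrivial.2 ⟨⟨a, b, hab⟩⟩
  set inner := ((Finset.univ.erase a).erase b).toList with hinner
  set l0 : List W := a :: (inner ++ [b]) with hl0
  have hbmem : b ∈ Finset.univ.erase a :=
    Finset.mem_erase.2 ⟨Ne.symm hab, Finset.mem_univ b⟩
  have hinnercard : inner.length = Fintype.card W - 2 := by
    rw [hinner, Finset.length_toList, Finset.card_erase_of_mem hbmem,
      Finset.card_erase_of_mem (Finset.mem_univ a), Finset.card_univ]
    omega
  have hanotin : a ∉ inner := by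
    rw [hinner, Finset.mem_toList]
    simp
  have hbnotin : b ∉ inner := by
    rw [hinner, Finset.mem_toList]
    simp
  have hinnernd : inner.Nodup := Finset.nodup_toList _
  refine ham_conn_aux H (Fintype.card W) l0 a b hdeg ?_ ?_ ?_ ?_ ?_
  · rw [hl0]
    simp only [List.nodup_cons, List.nodup_append', List.mem_append]
    refine ⟨?_, hinnernd, by simp, ?_⟩
    · rintro (h | h)
      · exact hanotin h
      · simp at h
        exact hab h
    · intro x hx
      simp only [List.mem_singleton]
      intro hxb
      exact hbnotin (hxb ▸ hx)
  · rw [hl0]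
    simp [hinnercard]
    omega
  · rfl
  · rw [hl0, show a :: (inner ++ [b]) = (a :: inner) ++ [b] from rfl]
    exact List.getLast?_concat
  · omega

end HamConn

variable {V : Type*} (G : SimpleGraph V)

lemma walk_of_chain : ∀ (l : List V) (x y : V), l.head? = some x → l.getLast? = some y →
    l.Chain' G.Adj → ∃ p : G.Walk x y, p.support = l ∧ p.edges = eo l
  | [], x, y, hx, _, _ => by simp at hx
  | [z], x, y, hx, hy, _ => by
      obtain rfl : x = z := by simpa using hx.symm
      obtain rfl : y = x := by simpa using hy.symm
      exact ⟨Walk.nil, by simp, by simp⟩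
  | z :: w :: t, x, y, hx, hy, hch => by
      obtain rfl : x = z := by simpa using hx.symm
      rw [List.Chain', List.isChain_cons_cons] at hch
      obtain ⟨hadj, hch'⟩ := hch
      have hy' : (w :: t).getLast? = some y := by
        rwa [List.getLast?_cons_cons] at hy
      obtain ⟨p', hs, he⟩ := walk_of_chain (w :: t) w y rfl hy' hch'
      refine ⟨Walk.cons hadj p', ?_, ?_⟩
      · rw [Walk.support_cons, hs]
      · rw [Walk.edges_cons, he, eo_cons_cons]

lemma cycle_of_list [DecidableEq V] (L : List V) (x : V) (hch : L.Chain' G.Adj) (hnd : L.Nodup)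
    (hhead : L.head? = some x) (hlen : 3 ≤ L.length)
    (hlast : ∀ z, L.getLast? = some z → G.Adj z x) (hall : ∀ v, v ∈ L) :
    ∃ c : G.Walk x x, c.IsHamiltonianCycle ∧ c.edges = eo (L ++ [x]) := by
  have hne : L ≠ [] := by rintro rfl; simp at hhead
  set z := L.getLast hne with hz
  have hzl : L.getLast? = some z := List.getLast?_eq_getLast hne
  have hadj : G.Adj z x := hlast z hzl
  set M := L ++ [x] with hM
  have hchain : M.Chain' G.Adj := by
    apply List.IsChain.append hch (List.isChain_singleton x)
    intro p hp q hq
    simp only [List.head?_cons, Option.mem_def, Option.some_inj] at hq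
    rw [hzl] at hp
    simp only [Option.mem_def, Option.some_inj] at hp
    rw [← hp, ← hq]
    exact hadj
  have hMh : M.head? = some x := by rw [hM, head?_append_left hne, hhead]
  have hMl : M.getLast? = some x := List.getLast?_concat
  obtain ⟨p, hsup, hedg⟩ := walk_of_chain G M x x hMh hMl hchain
  -- tail structure
  obtain ⟨L', hL'⟩ : ∃ L', L = x :: L' := by
    cases L with
    | nil => simp at hhead
    | cons c t => exact ⟨t, by simpa using congrArg (· :: t) (by simpa using hhead : c = x)⟩
  have hxnotin : x ∉ L' := by
    rw [hL'] at hnd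
    exact (List.nodup_cons.1 hnd).1
  have hL'nd : L'.Nodup := by
    rw [hL'] at hnd
    exact (List.nodup_cons.1 hnd).2
  -- path on L
  obtain ⟨p₀, hs₀, he₀⟩ := walk_of_chain G L x z hhead hzl hch
  have hp₀ : p₀.IsPath := Walk.IsPath.mk' (by rwa [hs₀])
  have heL : eo M = eo L ++ [s(z, x)] := by
    rw [hM, eo_append L hne [x] (by simp)]
    rfl
  have htail : L.tail = L' := by rw [hL']; rfl
  have hnotmem : s(z, x) ∉ eo L := by
    intro hmem
    obtain ⟨a, b, l1, l2, he, hdec⟩ := mem_eo hmem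
    rw [Sym2.eq_iff] at he
    rcases he with ⟨hza, hxb⟩ | ⟨hzb, hxa⟩
    · -- b = x : x occurs in the tail of L
      apply hxnotin
      rw [← htail, hdec]
      rcases l1 with _ | ⟨c, l1'⟩
      · simp [← hxb]
      · simp [← hxb]
    · -- a = x, b = z
      rcases l1 with _ | ⟨c, l1'⟩
      · -- L = a :: b :: l2, a = x, b = getLast L
        simp only [List.nil_append] at hdec
        have hL'2 : L' = b :: l2 := by
          have h := hL'.symm.trans hdec
          rw [← hxa] at h
          injection h with _ h2
        have h3 : (b :: l2).getLast? = some z := by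
          have h4 := hzl
          rw [hdec, List.getLast?_cons_cons] at h4
          exact h4
        have hblast : (b :: l2).getLast? = some b := by rw [h3, hzb]
        have hlen1 : (b :: l2).length = 1 := by
          apply head_getLast_nodup (hL'2 ▸ hL'nd) _ (by simp)
          rw [hblast]; rfl
        rw [hdec] at hlen
        simp only [List.length_cons] at hlen hlen1
        omega
      · -- a = x sits in the tail
        apply hxnotin
        rw [← htail, hdec]
        simp [← hxa]
  have hedges : p.edges = eo L ++ [s(z, x)] := by rw [hedg, heL]
  have heonodup : (eo L).Nodup := by
    have := hp₀.edges_nodup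
    rwa [he₀] at this
  have htrail : p.IsTrail := by
    rw [Walk.isTrail_def, hedges]
    rw [List.nodup_append']
    exact ⟨heonodup, List.nodup_singleton _, by
      intro e he1
      simp only [List.mem_singleton]
      intro hee
      exact hnotmem (hee ▸ he1)⟩
  have hsupM : p.support = x :: (L' ++ [x]) := by
    rw [hsup, hM, hL']
    rfl
  have hcyc : p.IsCycle := by
    rw [Walk.isCycle_def]
    refine ⟨htrail, ?_, ?_⟩
    · intro hnil
      have h5 := congrArg List.length hsup
      rw [hnil, hM] at h5
      simp only [Walk.support_nil, List.length_cons, List.length_nil,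
        List.length_append] at h5
      omega
    · rw [hsupM]
      simp only [List.tail_cons]
      rw [List.nodup_append']
      refine ⟨hL'nd, List.nodup_singleton _, ?_⟩
      intro e he1
      simp only [List.mem_singleton]
      intro hee
      exact hxnotin (hee ▸ he1)
  refine ⟨p, ?_, hedg⟩
  rw [Walk.isHamiltonianCycle_iff_isCycle_and_support_count_tail_eq_one]
  refine ⟨hcyc, ?_⟩
  intro v
  rw [hsupM]
  simp only [List.tail_cons]
  apply List.count_eq_one_of_mem
  · rw [List.nodup_append']
    refine ⟨hL'nd, List.nodup_singleton _, ?_⟩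
    intro e he1
    simp only [List.mem_singleton]
    intro hee
    exact hxnotin (hee ▸ he1)
  · by_cases hvx : v = x
    · subst hvx; simp
    · have := hall v
      rw [hL'] at this
      rcases List.mem_cons.1 this with h | h
      · exact absurd h hvx
      · exact List.mem_append.2 (Or.inl h)



-- helpers for counting
lemma len_filter_cons (p : Sym2 α → Bool) (e : Sym2 α) (L : List (Sym2 α)) :
    ((e :: L).filter p).length = (if p e then 1 else 0) + (L.filter p).length := by
  cases h : p e <;> simp [List.filter_cons, h] <;> omega

lemma len_filter_append (p : Sym2 α → Bool) (L1 L2 : List (Sym2 α)) :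
    ((L1 ++ L2).filter p).length = (L1.filter p).length + (L2.filter p).length := by
  rw [List.filter_append, List.length_append]

lemma len_filter_perm (p : Sym2 α → Bool) {L1 L2 : List (Sym2 α)} (h : L1 ~ L2) :
    (L1.filter p).length = (L2.filter p).length := (h.filter p).length_eq

lemma len_filter_not (f : Sym2 α → Bool) : ∀ (L : List (Sym2 α)),
    (L.filter f).length + (L.filter (fun e => !f e)).length = L.length
  | [] => rfl
  | e :: L => by
      have ih := len_filter_not f L
      cases h : f e <;> · simp only [List.filter_cons, h]; simp [h]; omega

lemma filter_bool_partition (φ : Sym2 α → Bool) (L : List (Sym2 α)) :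
    (L.filter (fun e => φ e = true)).length + (L.filter (fun e => φ e = false)).length
      = L.length := by
  have h := len_filter_not (fun e => φ e) L
  simpa using h

lemma head_of_head? {l : List α} {x : α} (h : l.head? = some x) (hne : l ≠ []) :
    l.head hne = x := by
  rw [List.head?_eq_head hne] at h
  exact Option.some_injective _ h

lemma getLast_of_getLast? {l : List α} {x : α} (h : l.getLast? = some x) (hne : l ≠ []) :
    l.getLast hne = x := by
  rw [List.getLast?_eq_getLast hne] at h
  exact Option.some_injective _ h


end OddC4


open OddC4

/-- Let `n ≥ 4` be even and let `G` be an `n`-vertex graph with minimum degree at least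
`n/2 + 2` whose edges are 2-coloured. If `G` contains a 4-cycle on which both colours appear
an odd number of times, then `G` contains a Hamilton cycle on which both colour classes have
even size. -/
theorem even_hamilton_of_odd_C4 {V : Type*} [Fintype V] [DecidableEq V]
    (G : SimpleGraph V) [DecidableRel G.Adj]
    (hn : 4 ≤ Fintype.card V) (he : Even (Fintype.card V))
    (hδ : Fintype.card V / 2 + 2 ≤ G.minDegree)
    (φ : Sym2 V → Bool)
    (hodd : ∃ (v : V) (w : G.Walk v v), w.IsCycle ∧ w.length = 4 ∧
      ∀ c : Bool, Odd ((w.edges.filter (fun e => φ e = c)).length)) :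
    ∃ (v : V) (w : G.Walk v v), w.IsHamiltonianCycle ∧
      ∀ c : Bool, Even ((w.edges.filter (fun e => φ e = c)).length) := by
  classical
  obtain ⟨x1, w, hcyc, hlen4, hcol⟩ := hodd
  -- decompose the 4-cycle
  cases w with
  | nil => simp at hlen4
  | cons h1 w =>
  rename_i x2
  cases w with
  | nil => simp at hlen4
  | cons h2 w =>
  rename_i x3
  cases w with
  | nil => simp at hlen4
  | cons h3 w =>
  rename_i x4
  cases w with
  | nil => simp at hlen4
  | cons h4 w =>
  rename_i x5
  cases w with
  | cons h5 w => simp [SimpleGraph.Walk.length_cons] at hlen4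
  | nil =>
  -- now x5 = x1 : walk nil : G.Walk x5 x1 forces x5 = x1? no: nil : Walk x5 x5, so unifies x5 := x1
  -- distinctness
  rw [SimpleGraph.Walk.isCycle_def] at hcyc
  have hnd2 : ([x2, x3, x4, x1] : List V).Nodup := by
    have h := hcyc.2.2
    simpa [SimpleGraph.Walk.support_cons] using h
  have hx23 : x2 ≠ x3 := by intro h; rw [h] at hnd2; simp at hnd2
  have hx24 : x2 ≠ x4 := by intro h; rw [h] at hnd2; simp at hnd2
  have hx21 : x2 ≠ x1 := by intro h; rw [h] at hnd2; simp at hnd2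
  have hx34 : x3 ≠ x4 := by intro h; rw [h] at hnd2; simp at hnd2
  have hx31 : x3 ≠ x1 := by intro h; rw [h] at hnd2; simp at hnd2
  have hx41 : x4 ≠ x1 := by intro h; rw [h] at hnd2; simp at hnd2
  -- colour parity of the C4
  have hoddsum : Odd ((if φ s(x1, x2) = true then 1 else 0) + ((if φ s(x2, x3) = true then 1 else 0)
      + ((if φ s(x3, x4) = true then 1 else 0) + (if φ s(x4, x1) = true then 1 else 0)))) := by
    have h := hcol true
    simp only [SimpleGraph.Walk.edges_cons, SimpleGraph.Walk.edges_nil] at h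
    rw [show ([s(x1, x2), s(x2, x3), s(x3, x4), s(x4, x1)] : List (Sym2 V))
        = s(x1,x2) :: (s(x2,x3) :: (s(x3,x4) :: (s(x4,x1) :: []))) from rfl] at h
    rw [len_filter_cons, len_filter_cons, len_filter_cons, len_filter_cons] at h
    simpa using h
  -- the subtype graph on V \ {x2, x3}
  set n := Fintype.card V with hn'
  let Wt := {y : V // y ≠ x2 ∧ y ≠ x3}
  let H : SimpleGraph Wt := G.comap (Subtype.val)
  haveI instH : DecidableRel H.Adj := fun u v => decidable_of_iff (G.Adj u.1 v.1) Iff.rfl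
  have hcardW : Fintype.card Wt = n - 2 := by
    rw [show Fintype.card Wt = (Finset.univ.filter fun y : V => y ≠ x2 ∧ y ≠ x3).card from
      Fintype.card_subtype _]
    have hset : (Finset.univ.filter fun y : V => y ≠ x2 ∧ y ≠ x3)
        = (Finset.univ.erase x2).erase x3 := by
      ext y
      simp only [Finset.mem_filter, Finset.mem_univ, true_and, Finset.mem_erase]
      tauto
    rw [hset, Finset.card_erase_of_mem (Finset.mem_erase.2 ⟨hx23.symm, Finset.mem_univ x3⟩),
      Finset.card_erase_of_mem (Finset.mem_univ x2), Finset.card_univ, ← hn']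
    omega
  have hdG : ∀ v : V, n / 2 + 2 ≤ G.degree v := fun v => le_trans hδ (G.minDegree_le_degree v)
  have h2d : ∀ v : V, n + 4 ≤ 2 * G.degree v := by
    intro v
    have h := hdG v
    have he2 : n / 2 * 2 = n := Nat.div_mul_cancel (even_iff_two_dvd.mp he)
    omega
  have hdegH : ∀ u : Wt, Fintype.card Wt + 2 ≤ 2 * H.degree u := by
    intro u
    have hsurj : Set.SurjOn (Subtype.val : Wt → V) (H.neighborFinset u)
        (((G.neighborFinset u.1).erase x3).erase x2) := by
      intro y hy
      simp only [Finset.coe_erase, Set.mem_diff, Finset.mem_coe,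
        SimpleGraph.mem_neighborFinset, Set.mem_singleton_iff] at hy
      obtain ⟨⟨hadj, hy3⟩, hy2⟩ := hy
      refine ⟨⟨y, hy2, hy3⟩, ?_, rfl⟩
      simp only [Finset.mem_coe, SimpleGraph.mem_neighborFinset]
      exact hadj
    have hc1 := Finset.card_le_card_of_surjOn _ hsurj
    have hc2 : (G.neighborFinset u.1).card ≤ ((G.neighborFinset u.1).erase x3).card + 1 :=
      erase_card_le _ _
    have hc3 : ((G.neighborFinset u.1).erase x3).card
        ≤ (((G.neighborFinset u.1).erase x3).erase x2).card + 1 := erase_card_le _ _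
    rw [SimpleGraph.card_neighborFinset_eq_degree] at hc2
    have hdeg' := h2d u.1
    have hdegH' : (H.neighborFinset u).card = H.degree u :=
      SimpleGraph.card_neighborFinset_eq_degree _ _
    rw [hcardW]
    omega
  -- apply Hamilton-connectedness from x1 to x4
  obtain ⟨l0, hl0nd, hl0len, hl0h, hl0l, hl0ch⟩ := ham_conn H
    (⟨x1, hx21.symm, hx31.symm⟩ : Wt) (⟨x4, hx24.symm, hx34.symm⟩ : Wt)
    (by intro hcontra; exact hx41 (congrArg Subtype.val hcontra).symm) hdegH
  -- map to V
  set l : List V := l0.map Subtype.val with hldef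
  have hndl : l.Nodup := hl0nd.map Subtype.val_injective
  have hlenl : l.length = n - 2 := by rw [hldef, List.length_map, hl0len, hcardW]
  have hheadl : l.head? = some x1 := by rw [hldef, List.head?_map, hl0h]; rfl
  have hlastl : l.getLast? = some x4 := by rw [hldef, List.getLast?_map, hl0l]; rfl
  have hchl : l.Chain' G.Adj := by
    rw [hldef, List.Chain', List.isChain_map]
    exact hl0ch
  have hne : l ≠ [] := by
    intro hcontra
    rw [hcontra] at hheadl
    simp at hheadl
  have hl0all : ∀ u : Wt, u ∈ l0 := by
    intro u
    have h1 : l0.toFinset.card = Fintype.card Wt := by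
      rw [List.toFinset_card_of_nodup hl0nd]
      exact hl0len
    have h2 := Finset.eq_univ_of_card _ h1
    rw [← List.mem_toFinset, h2]
    exact Finset.mem_univ u
  have hmeml : ∀ y : V, y ≠ x2 → y ≠ x3 → y ∈ l := by
    intro y hy2 hy3
    rw [hldef]
    exact List.mem_map_of_mem (hl0all ⟨y, hy2, hy3⟩)
  have hnotx2 : x2 ∉ l := by
    rw [hldef]
    intro hcontra
    obtain ⟨u, _, hval⟩ := List.mem_map.1 hcontra
    exact u.2.1 hval
  have hnotx3 : x3 ∉ l := by
    rw [hldef]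
    intro hcontra
    obtain ⟨u, _, hval⟩ := List.mem_map.1 hcontra
    exact u.2.2 hval
  -- pigeonhole for the insertion position
  have hlen2 : 2 ≤ l.length := by omega
  set SA := (Finset.range (l.length - 1)).filter (fun k => G.Adj (l.getD k x1) x3) with hSA
  set SB := (Finset.range (l.length - 1)).filter (fun k => G.Adj x2 (l.getD (k + 1) x1)) with hSB
  set NA := ((G.neighborFinset x3).erase x2).erase (l.getLast hne) with hNA
  set NB := ((G.neighborFinset x2).erase x3).erase (l.head hne) with hNB
  have hNAmem : ∀ y ∈ NA, y ∈ l := by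
    intro y hy
    rw [hNA] at hy
    obtain ⟨hyL, hy'⟩ := Finset.mem_erase.1 hy
    obtain ⟨hy2, hy3⟩ := Finset.mem_erase.1 hy'
    rw [SimpleGraph.mem_neighborFinset] at hy3
    exact hmeml y hy2 (fun h => (G.ne_of_adj hy3) h.symm)
  have hNBmem : ∀ y ∈ NB, y ∈ l := by
    intro y hy
    rw [hNB] at hy
    obtain ⟨hyH, hy'⟩ := Finset.mem_erase.1 hy
    obtain ⟨hy3, hy2⟩ := Finset.mem_erase.1 hy'
    rw [SimpleGraph.mem_neighborFinset] at hy2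
    exact hmeml y (fun h => (G.ne_of_adj hy2) h.symm) hy3
  have hposA := pos_lemma_A l x1 hndl hne NA hNAmem (by rw [hNA]; exact Finset.notMem_erase _ _)
  have hposB := pos_lemma_B l x1 hndl hne NB hNBmem (by rw [hNB]; exact Finset.notMem_erase _ _)
  have hsubA : (Finset.range (l.length - 1)).filter (fun k => l.getD k x1 ∈ NA) ⊆ SA := by
    intro k hk
    rw [Finset.mem_filter] at hk
    rw [hSA, Finset.mem_filter]
    refine ⟨hk.1, ?_⟩
    obtain ⟨_, h'⟩ := Finset.mem_erase.1 hk.2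
    obtain ⟨_, h''⟩ := Finset.mem_erase.1 h'
    rw [SimpleGraph.mem_neighborFinset] at h''
    exact h''.symm
  have hsubB : (Finset.range (l.length - 1)).filter (fun k => l.getD (k + 1) x1 ∈ NB) ⊆ SB := by
    intro k hk
    rw [Finset.mem_filter] at hk
    rw [hSB, Finset.mem_filter]
    refine ⟨hk.1, ?_⟩
    obtain ⟨_, h'⟩ := Finset.mem_erase.1 hk.2
    obtain ⟨_, h''⟩ := Finset.mem_erase.1 h'
    rw [SimpleGraph.mem_neighborFinset] at h''
    exact h''
  have hcardNA : G.degree x3 ≤ NA.card + 2 := by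
    have c1 : (G.neighborFinset x3).card ≤ ((G.neighborFinset x3).erase x2).card + 1 :=
      erase_card_le _ _
    have c2 : ((G.neighborFinset x3).erase x2).card ≤ NA.card + 1 := by
      rw [hNA]; exact erase_card_le _ _
    rw [SimpleGraph.card_neighborFinset_eq_degree] at c1
    omega
  have hcardNB : G.degree x2 ≤ NB.card + 2 := by
    have c1 : (G.neighborFinset x2).card ≤ ((G.neighborFinset x2).erase x3).card + 1 :=
      erase_card_le _ _
    have c2 : ((G.neighborFinset x2).erase x3).card ≤ NB.card + 1 := by
      rw [hNB]; exact erase_card_le _ _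
    rw [SimpleGraph.card_neighborFinset_eq_degree] at c1
    omega
  have hSAcard : G.degree x3 ≤ SA.card + 2 := by
    have h := le_trans hposA (Finset.card_le_card hsubA)
    omega
  have hSBcard : G.degree x2 ≤ SB.card + 2 := by
    have h := le_trans hposB (Finset.card_le_card hsubB)
    omega
  have hUcard : (SA ∪ SB).card ≤ l.length - 1 := by
    have h : SA ∪ SB ⊆ Finset.range (l.length - 1) := by
      apply Finset.union_subset
      · rw [hSA]; exact Finset.filter_subset _ _
      · rw [hSB]; exact Finset.filter_subset _ _
    have := Finset.card_le_card h
    rwa [Finset.card_range] at this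
  have hinter : 0 < (SA ∩ SB).card := by
    have h1 := Finset.card_union_add_card_inter SA SB
    have d3 := h2d x3
    have d2 := h2d x2
    omega
  obtain ⟨k, hk⟩ := Finset.card_pos.1 hinter
  rw [Finset.mem_inter] at hk
  obtain ⟨hkA, hkB⟩ := hk
  rw [hSA, Finset.mem_filter, Finset.mem_range] at hkA
  rw [hSB, Finset.mem_filter, Finset.mem_range] at hkB
  obtain ⟨hkm, hu⟩ := hkA
  obtain ⟨-, hv⟩ := hkB
  set u := l.getD k x1 with hudef
  set wv := l.getD (k + 1) x1 with hwvdef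
  -- split l at position k
  set T := l.take (k + 1) with hT
  set D := l.drop (k + 1) with hD
  have hTD : T ++ D = l := List.take_append_drop _ _
  have hTlen : T.length = k + 1 := by rw [hT, List.length_take]; omega
  have hDlen : D.length = l.length - (k + 1) := by rw [hD, List.length_drop]
  have hTne : T ≠ [] := by
    intro h
    have := congrArg List.length h
    rw [hTlen] at this
    simp at this
  have hDne : D ≠ [] := by
    intro h
    have := congrArg List.length h
    rw [hDlen] at this
    simp at this
    omega
  have hThead : T.head? = some x1 := by
    rw [hT, List.head?_eq_getElem?, List.getElem?_take, if_pos (by omega : 0 < k + 1),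
      ← List.head?_eq_getElem?, hheadl]
  have hTlast : T.getLast? = some u := by
    rw [hT, List.getLast?_eq_getElem?, List.length_take,
      show min (k + 1) l.length - 1 = k from by omega,
      List.getElem?_take, if_pos (by omega : k < k + 1),
      List.getElem?_eq_getElem (by omega : k < l.length),
      hudef, List.getD_eq_getElem l x1 (by omega : k < l.length)]
  have hDhead : D.head? = some wv := by
    rw [hD, List.head?_eq_getElem?, List.getElem?_drop,
      List.getElem?_eq_getElem (by omega : k + 1 + 0 < l.length),
      hwvdef, List.getD_eq_getElem l x1 (by omega : k + 1 < l.length)]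
  have hDlast : D.getLast? = some x4 := by
    rw [← getLast?_append_right (l1 := T) hDne, hTD]
    exact hlastl
  have hchT : T.Chain' G.Adj := hT ▸ hchl.take _
  have hchD : D.Chain' G.Adj := hD ▸ hchl.drop _
  -- the two Hamiltonian lists
  set L1 := T ++ ([x3, x2] ++ D) with hL1
  set L2 := T ++ ([x3] ++ (D.reverse ++ [x2])) with hL2
  have hbT3 : ∀ p ∈ T.getLast?, G.Adj p x3 := by
    intro p hp
    rw [hTlast] at hp
    simp only [Option.mem_def, Option.some_inj] at hp
    exact hp ▸ hu
  have hL1chain : L1.Chain' G.Adj := by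
    rw [hL1]
    apply List.IsChain.append hchT
    · apply List.IsChain.append (List.isChain_pair.2 h2.symm) hchD
      intro p hp q hq
      simp only [List.getLast?_cons_cons, List.getLast?_singleton,
        Option.mem_def, Option.some_inj] at hp
      rw [hDhead] at hq
      simp only [Option.mem_def, Option.some_inj] at hq
      rw [← hp, ← hq]
      exact hv
    · intro p hp q hq
      simp only [List.cons_append, List.head?_cons, Option.mem_def, Option.some_inj] at hq
      rw [← hq]
      exact hbT3 p hp
  have hDrevne : D.reverse ≠ [] := by simpa using hDne
  have hL2chain : L2.Chain' G.Adj := by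
    rw [hL2]
    apply List.IsChain.append hchT
    · apply List.IsChain.append (List.isChain_singleton x3)
      · apply List.IsChain.append ?_ (List.isChain_singleton x2)
        · intro p hp q hq
          rw [List.getLast?_reverse, hDhead] at hp
          simp only [Option.mem_def, Option.some_inj, List.head?_cons] at hp hq
          rw [← hp, ← hq]
          exact hv.symm
        · rw [List.isChain_reverse]
          exact hchD.imp (fun _ _ hab => hab.symm)
      · intro p hp q hq
        simp only [List.getLast?_singleton, Option.mem_def, Option.some_inj] at hp
        rw [head?_append_left hDrevne, List.head?_reverse, hDlast] at hq
        simp only [Option.mem_def, Option.some_inj] at hq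
        rw [← hp, ← hq]
        exact h3
    · intro p hp q hq
      simp only [List.cons_append, List.head?_cons, Option.mem_def, Option.some_inj] at hq
      rw [← hq]
      exact hbT3 p hp
  have hL1perm : L1 ~ x3 :: x2 :: l := by
    calc L1 = T ++ (x3 :: (x2 :: D)) := by rw [hL1]; rfl
    _ ~ x3 :: (T ++ (x2 :: D)) := List.perm_middle
    _ ~ x3 :: (x2 :: (T ++ D)) := (List.perm_middle).cons x3
    _ = x3 :: x2 :: l := by rw [hTD]
  have hL2perm : L2 ~ x3 :: x2 :: l := by
    calc L2 = T ++ (x3 :: (D.reverse ++ [x2])) := by rw [hL2]; rfl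
    _ ~ x3 :: (T ++ (D.reverse ++ [x2])) := List.perm_middle
    _ = x3 :: ((T ++ D.reverse) ++ [x2]) := by rw [List.append_assoc]
    _ ~ x3 :: ([x2] ++ (T ++ D.reverse)) := (List.perm_append_comm).cons x3
    _ = x3 :: x2 :: (T ++ D.reverse) := rfl
    _ ~ x3 :: x2 :: (T ++ D) := (((List.reverse_perm D).append_left T).cons x2).cons x3
    _ = x3 :: x2 :: l := by rw [hTD]
  have htargetnd : (x3 :: x2 :: l).Nodup := by
    rw [List.nodup_cons, List.nodup_cons]
    refine ⟨?_, ⟨hnotx2, hndl⟩⟩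
    intro h
    rcases List.mem_cons.1 h with h | h
    · exact hx23 h.symm
    · exact hnotx3 h
  have hL1nd : L1.Nodup := hL1perm.symm.nodup htargetnd
  have hL2nd : L2.Nodup := hL2perm.symm.nodup htargetnd
  have hL1len : L1.length = n := by
    have := hL1perm.length_eq
    simp only [List.length_cons] at this
    omega
  have hL2len : L2.length = n := by
    have := hL2perm.length_eq
    simp only [List.length_cons] at this
    omega
  have hL1head : L1.head? = some x1 := by rw [hL1, head?_append_left hTne, hThead]
  have hL2head : L2.head? = some x1 := by rw [hL2, head?_append_left hTne, hThead]
  have hL1last : L1.getLast? = some x4 := by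
    rw [hL1, getLast?_append_right (by simp : ([x3, x2] ++ D) ≠ []),
      getLast?_append_right hDne]
    exact hDlast
  have hL2last : L2.getLast? = some x2 := by
    rw [hL2, getLast?_append_right (by simp : ([x3] ++ (D.reverse ++ [x2])) ≠ []),
      getLast?_append_right (by simp : (D.reverse ++ [x2]) ≠ []),
      getLast?_append_right (by simp : ([x2] : List V) ≠ [])]
    rfl
  have hL1all : ∀ y, y ∈ L1 := by
    intro y
    rw [hL1perm.mem_iff]
    by_cases h3' : y = x3
    · simp [h3']
    · by_cases h2' : y = x2
      · simp [h2']
      · simp only [List.mem_cons]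
        exact Or.inr (Or.inr (hmeml y h2' h3'))
  have hL2all : ∀ y, y ∈ L2 := by
    intro y
    rw [hL2perm.mem_iff]
    by_cases h3' : y = x3
    · simp [h3']
    · by_cases h2' : y = x2
      · simp [h2']
      · simp only [List.mem_cons]
        exact Or.inr (Or.inr (hmeml y h2' h3'))
  obtain ⟨c1, hc1ham, hc1ed⟩ := cycle_of_list G L1 x1 hL1chain hL1nd hL1head
    (by omega) (fun z hz => by
      rw [hL1last] at hz
      injection hz with hz
      rw [← hz]
      exact h4) hL1all
  obtain ⟨c2, hc2ham, hc2ed⟩ := cycle_of_list G L2 x1 hL2chain hL2nd hL2head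
    (by omega) (fun z hz => by
      rw [hL2last] at hz
      injection hz with hz
      rw [← hz]
      exact h1.symm) hL2all
  -- value-level boundary facts
  have hTlastv : T.getLast hTne = u := getLast_of_getLast? hTlast hTne
  have hDx1ne : (D ++ [x1] : List V) ≠ [] := by simp
  have hDx1head : (D ++ [x1]).head hDx1ne = wv :=
    head_of_head? (by rw [head?_append_left hDne]; exact hDhead) _
  have hDlastv : D.getLast hDne = x4 := getLast_of_getLast? hDlast hDne
  have hDrevx21ne : (D.reverse ++ [x2, x1] : List V) ≠ [] := by simp
  have hDrevheadv : (D.reverse ++ [x2, x1]).head hDrevx21ne = x4 :=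
    head_of_head? (by rw [head?_append_left hDrevne, List.head?_reverse]; exact hDlast) _
  have hDrevlastv : D.reverse.getLast hDrevne = wv :=
    getLast_of_getLast? (by rw [List.getLast?_reverse]; exact hDhead) _
  have hE1 : eo (L1 ++ [x1])
      = eo T ++ s(u, x3) :: (s(x3, x2) :: (s(x2, wv) :: (eo D ++ s(x4, x1) :: eo [x1]))) := by
    have ha : L1 ++ [x1] = T ++ ([x3, x2] ++ (D ++ [x1])) := by rw [hL1]; simp
    rw [ha, eo_append T hTne ([x3, x2] ++ (D ++ [x1])) (by simp),
      eo_append [x3, x2] (by simp) (D ++ [x1]) hDx1ne,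
      eo_append D hDne [x1] (by simp)]
    rw [hTlastv, hDlastv]
    simp [hDx1head]
  have hE2 : eo (L2 ++ [x1])
      = eo T ++ s(u, x3) :: (s(x3, x4) :: ((eo D).reverse ++ s(wv, x2) :: (s(x2, x1) :: []))) := by
    have ha : L2 ++ [x1] = T ++ ([x3] ++ (D.reverse ++ [x2, x1])) := by rw [hL2]; simp
    rw [ha, eo_append T hTne ([x3] ++ (D.reverse ++ [x2, x1])) (by simp),
      eo_append [x3] (by simp) (D.reverse ++ [x2, x1]) hDrevx21ne,
      eo_append D.reverse hDrevne [x2, x1] (by simp),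
      eo_reverse]
    rw [hTlastv, hDrevlastv]
    simp [hDrevheadv]
  -- counting
  have hcount1 : (c1.edges.filter (fun e => φ e = true)).length
      = ((eo T).filter (fun e => φ e = true)).length
        + ((eo D).filter (fun e => φ e = true)).length
        + (if φ s(u, x3) = true then 1 else 0) + (if φ s(x2, wv) = true then 1 else 0)
        + ((if φ s(x2, x3) = true then 1 else 0) + (if φ s(x4, x1) = true then 1 else 0)) := by
    rw [hc1ed, hE1, len_filter_append, len_filter_cons, len_filter_cons, len_filter_cons,
      len_filter_append, len_filter_cons]
    rw [show s(x3, x2) = s(x2, x3) from Sym2.eq_swap]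
    simp only [eo_single, List.filter_nil, List.length_nil, decide_eq_true_eq]
    omega
  have hcount2 : (c2.edges.filter (fun e => φ e = true)).length
      = ((eo T).filter (fun e => φ e = true)).length
        + ((eo D).filter (fun e => φ e = true)).length
        + (if φ s(u, x3) = true then 1 else 0) + (if φ s(x2, wv) = true then 1 else 0)
        + ((if φ s(x3, x4) = true then 1 else 0) + (if φ s(x1, x2) = true then 1 else 0)) := by
    rw [hc2ed, hE2, len_filter_append, len_filter_cons, len_filter_cons,
      len_filter_append, len_filter_cons, len_filter_cons]
    rw [show s(wv, x2) = s(x2, wv) from Sym2.eq_swap,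
      show s(x2, x1) = s(x1, x2) from Sym2.eq_swap]
    rw [len_filter_perm (fun e => φ e = true) (List.reverse_perm (eo D))]
    simp only [List.filter_nil, List.length_nil, decide_eq_true_eq]
    omega
  -- choose the cycle with even count of `true` edges
  have hkey : ∃ cw : G.Walk x1 x1, cw.IsHamiltonianCycle ∧
      Even ((cw.edges.filter (fun e => φ e = true)).length) := by
    rcases Nat.even_or_odd ((c1.edges.filter (fun e => φ e = true)).length) with hev | hod
    · exact ⟨c1, hc1ham, hev⟩
    · refine ⟨c2, hc2ham, ?_⟩
      rw [Nat.even_iff]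
      rw [Nat.odd_iff] at hod hoddsum
      rw [hcount1] at hod
      rw [hcount2]
      omega
  obtain ⟨cw, hham, heven⟩ := hkey
  refine ⟨x1, cw, hham, ?_⟩
  intro c
  cases c
  · -- c = false
    have hpart := filter_bool_partition φ cw.edges
    have hlenE : cw.edges.length = n := by
      rw [SimpleGraph.Walk.length_edges]
      exact hham.length_eq
    rw [Nat.even_iff] at heven ⊢
    rw [Nat.even_iff] at he
    omega
  · exact heven
end

section
/- Suppose the vertex set of a graph G is partitioned into two classes A and B, and G is 2-edge-coloured so that: for any two vertices x, y in the same class, every common neighbour of x and y sends edges of the same colour to x and y; and for any x ∈ A, y ∈ B, every common neighbour sends edges of opposite colours to x and y. Then every Hamilton cycle of G (with n = v(G) even) has both colour classes of even size. -/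
open SimpleGraph

open scoped Classical in
private lemma key_parity {V : Type*} (G : SimpleGraph V) (A : Set V) (ψ : Sym2 V → Bool)
    (hsame : ∀ x y w : V, G.Adj w x → G.Adj w y → x ≠ y → (x ∈ A ↔ y ∈ A) →
      ψ s(w, x) = ψ s(w, y))
    (hdiff : ∀ x y w : V, G.Adj w x → G.Adj w y → x ≠ y → ¬(x ∈ A ↔ y ∈ A) →
      ψ s(w, x) ≠ ψ s(w, y)) :
    ∀ {x y : V} (p : G.Walk x y), p.edges.Nodup → Even p.length →
      ((p.edges.countP (fun e => ψ e) : ZMod 2)) =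
        (if x ∈ A then 1 else 0) + (if y ∈ A then 1 else 0)
  | x, _, .nil, _, _ => by by_cases hx : x ∈ A <;> simp [hx] <;> decide
  | x, y, .cons h .nil, _, hev => by simp at hev
  | x, y, .cons (v := m) h (.cons (v := z) h' q), hnd, hev => by
    have hnd' := hnd
    simp only [Walk.edges_cons, List.nodup_cons, List.mem_cons] at hnd'
    have hxz : x ≠ z := by
      rintro rfl
      exact hnd'.1 (.inl (Sym2.eq_swap))
    have hq : q.edges.Nodup := hnd'.2.2
    have hevq : Even q.length := by
      simp only [Walk.length_cons] at hev
      rcases hev with ⟨k, hk⟩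
      exact ⟨k - 1, by omega⟩
    have IH := key_parity G A ψ hsame hdiff q hq hevq
    have hx : G.Adj m x := h.symm
    have hz : G.Adj m z := h'
    have hrel : (ψ s(m, x) = ψ s(m, z)) ↔ (x ∈ A ↔ z ∈ A) := by
      constructor
      · intro hb
        by_contra hiff
        exact hdiff x z m hx hz hxz hiff hb
      · exact hsame x z m hx hz hxz
    have hsymm : s(x, m) = s(m, x) := Sym2.eq_swap
    have htwo : ((if ψ s(x, m) then 1 else 0) + (if ψ s(m, z) then 1 else 0) : ZMod 2)
        = (if x ∈ A then 1 else 0) + (if z ∈ A then 1 else 0) := by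
      rw [hsymm]
      by_cases hxA : x ∈ A <;> by_cases hzA : z ∈ A <;>
        cases h1 : ψ s(m, x) <;> cases h2 : ψ s(m, z) <;>
        simp_all <;> decide
    calc ((((Walk.cons h (Walk.cons h' q)).edges).countP (fun e => ψ e) : ℕ) : ZMod 2)
        = ((if ψ s(x, m) then 1 else 0) + (if ψ s(m, z) then 1 else 0)
            + (q.edges.countP (fun e => ψ e) : ZMod 2)) := by
          simp only [Walk.edges_cons, List.countP_cons]
          push_cast
          by_cases h1 : ψ s(x, m) <;> by_cases h2 : ψ s(m, z) <;> simp [h1, h2] <;> ring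
      _ = (if x ∈ A then 1 else 0) + (if z ∈ A then 1 else 0)
            + ((if z ∈ A then 1 else 0) + (if y ∈ A then 1 else 0)) := by rw [htwo, IH]
      _ = (if x ∈ A then 1 else 0) + (if y ∈ A then 1 else 0) := by
          by_cases hxA : x ∈ A <;> by_cases hzA : z ∈ A <;> by_cases hyA : y ∈ A <;>
            simp [hxA, hzA, hyA] <;> decide

/-- Suppose the vertex set of a graph `G` is partitioned into classes `A` and `Aᶜ`, and `G`
is 2-edge-coloured so that every common neighbour of two vertices in the same class sends
them edges of the same colour, while every common neighbour of two vertices in different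
classes sends them edges of opposite colours. Then (for `v(G)` even) every Hamilton cycle of
`G` has both colour classes of even size. -/
theorem even_hamilton_of_agreement {V : Type*} [Fintype V] [DecidableEq V]
    (G : SimpleGraph V) (A : Set V) (φ : Sym2 V → Bool)
    (hsame : ∀ x y w : V, G.Adj w x → G.Adj w y → x ≠ y → (x ∈ A ↔ y ∈ A) →
      φ s(w, x) = φ s(w, y))
    (hdiff : ∀ x y w : V, G.Adj w x → G.Adj w y → x ≠ y → ¬(x ∈ A ↔ y ∈ A) →
      φ s(w, x) ≠ φ s(w, y))
    (he : Even (Fintype.card V)) :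
    ∀ (v : V) (w : G.Walk v v), w.IsHamiltonianCycle →
      ∀ c : Bool, Even ((w.edges.filter (fun e => φ e = c)).length) := by
  classical
  intro v w hw c
  set ψ : Sym2 V → Bool := fun e => decide (φ e = c) with hψ
  have hsame' : ∀ x y u : V, G.Adj u x → G.Adj u y → x ≠ y → (x ∈ A ↔ y ∈ A) →
      ψ s(u, x) = ψ s(u, y) := by
    intro x y u h1 h2 h3 h4
    simp [hψ, hsame x y u h1 h2 h3 h4]
  have hdiff' : ∀ x y u : V, G.Adj u x → G.Adj u y → x ≠ y → ¬(x ∈ A ↔ y ∈ A) →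
      ψ s(u, x) ≠ ψ s(u, y) := by
    intro x y u h1 h2 h3 h4
    have := hdiff x y u h1 h2 h3 h4
    simp only [hψ, ne_eq, decide_eq_decide]
    cases hc1 : φ s(u, x) <;> cases hc2 : φ s(u, y) <;> simp_all <;> cases c <;> simp_all
  have hnd : w.edges.Nodup := hw.isCycle.edges_nodup
  have hev : Even w.length := hw.length_eq ▸ he
  have hkey := key_parity G A ψ hsame' hdiff' w hnd hev
  have h0 : ((w.edges.countP (fun e => ψ e) : ℕ) : ZMod 2) = 0 := by
    rw [hkey]
    by_cases hv : v ∈ A <;> simp [hv] <;> decide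
  have hdvd : (2 : ℕ) ∣ w.edges.countP (fun e => ψ e) := by
    rwa [ZMod.natCast_eq_zero_iff] at h0
  have heq : (w.edges.filter (fun e => φ e = c)).length = w.edges.countP (fun e => ψ e) := by
    rw [List.countP_eq_length_filter]
  rw [heq]
  obtain ⟨k, hk⟩ := hdvd
  exact ⟨k, by omega⟩
end
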